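/- arXiv:math/0311269 — 4 statements merged into one kernel-verified Lean document; each statement's English description precedes it below -/
import Mathlib

section
/- Let g : ℝ → [0,∞) be a function of class MK, i.e., g is continuous, g(0) = 0, g is even, and g is strictly increasing on [0,∞). Let φ : [0,∞) → ℝ be differentiable with Lipschitz continuous derivative φ', and assume ∫₀^∞ g(φ(s)) ds < ∞. Then φ(s) → 0 and φ'(s) → 0 as s → ∞. -/
open MeasureTheory Set Filter Topology
open scoped ENNReal

/-- If `φ' ≥ m` on `[a,b] ⊆ [0,∞)`, then `φ b - φ a ≥ m (b - a)`. -/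
lemma bbl_mono_bound (φ φ' : ℝ → ℝ)
    (hφ : ∀ t ∈ Ici (0:ℝ), HasDerivWithinAt φ (φ' t) (Ici (0:ℝ)) t)
    {a b m : ℝ} (ha : 0 ≤ a) (hab : a ≤ b) (hm : ∀ t ∈ Icc a b, m ≤ φ' t) :
    m * (b - a) ≤ φ b - φ a := by
  have hsub : Icc a b ⊆ Ici (0:ℝ) := fun t ht => ha.trans ht.1
  have hc : ContinuousOn φ (Icc a b) := fun t ht =>
    ((hφ t (hsub ht)).continuousWithinAt).mono hsub
  have hD : ∀ t ∈ Ioo a b, HasDerivAt φ (φ' t) t := by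
    intro t ht
    have h0 : 0 < t := lt_of_le_of_lt ha ht.1
    exact (hφ t h0.le).hasDerivAt (Ici_mem_nhds h0)
  have hdiff : DifferentiableOn ℝ φ (interior (Icc a b)) := by
    rw [interior_Icc]
    exact fun t ht => ((hD t ht).differentiableAt).differentiableWithinAt
  have hge : ∀ t ∈ interior (Icc a b), m ≤ deriv φ t := by
    rw [interior_Icc]
    intro t ht
    rw [(hD t ht).deriv]
    exact hm t (Ioo_subset_Icc_self ht)
  exact (convex_Icc a b).mul_sub_le_image_sub_of_le_deriv hc hdiff hge a
    (left_mem_Icc.2 hab) b (right_mem_Icc.2 hab) hab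

/-- If `φ' ≤ M` on `[a,b] ⊆ [0,∞)`, then `φ b - φ a ≤ M (b - a)`. -/
lemma bbl_anti_bound (φ φ' : ℝ → ℝ)
    (hφ : ∀ t ∈ Ici (0:ℝ), HasDerivWithinAt φ (φ' t) (Ici (0:ℝ)) t)
    {a b M : ℝ} (ha : 0 ≤ a) (hab : a ≤ b) (hm : ∀ t ∈ Icc a b, φ' t ≤ M) :
    φ b - φ a ≤ M * (b - a) := by
  have := bbl_mono_bound (fun t => -φ t) (fun t => -φ' t)
    (fun t ht => (hφ t ht).neg) ha hab (m := -M) (fun t ht => neg_le_neg (hm t ht))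
  simp only [neg_mul, neg_sub_neg] at this
  linarith

/-- If `f ≥ c > 0` on infinitely many disjoint intervals of length `ℓ` in `(0,∞)`,
then `∫⁻ f = ⊤` on `(0,∞)`. -/
lemma bbl_lintegral_top (f : ℝ → ℝ≥0∞) {t : ℕ → ℝ} {ℓ : ℝ} (hℓ : 0 < ℓ) {c : ℝ≥0∞}
    (hc : c ≠ 0) (ht0 : 0 < t 0) (hgap : ∀ n, t n + ℓ ≤ t (n + 1))
    (hf : ∀ n, ∀ x ∈ Ico (t n) (t n + ℓ), c ≤ f x) :
    ∫⁻ x in Ioi (0:ℝ), f x = ⊤ := by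
  have hmono : Monotone t := monotone_nat_of_le_succ fun n =>
    (le_add_of_nonneg_right hℓ.le).trans (hgap n)
  have hdisj : Pairwise (Function.onFun Disjoint fun n => Ico (t n) (t n + ℓ)) := by
    intro m n hmn
    wlog h : m < n generalizing m n
    · exact (this hmn.symm (hmn.lt_or_gt.resolve_left h)).symm
    have : t m + ℓ ≤ t n := (hgap m).trans (hmono h)
    simp only [Function.onFun]
    rw [Set.Ico_disjoint_Ico]
    exact le_trans (min_le_left _ _) (this.trans (le_max_right _ _))
  have hsub : (⋃ n, Ico (t n) (t n + ℓ)) ⊆ Ioi (0:ℝ) := by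
    intro x hx
    obtain ⟨n, hn⟩ := mem_iUnion.1 hx
    exact lt_of_lt_of_le (lt_of_lt_of_le ht0 (hmono (Nat.zero_le n))) hn.1
  have htop : (⊤ : ℝ≥0∞) ≤ ∫⁻ x in Ioi (0:ℝ), f x := by
    calc (⊤ : ℝ≥0∞) = ∑' _ : ℕ, c * ENNReal.ofReal ℓ := by
          rw [ENNReal.tsum_const_eq_top_of_ne_zero]
          simp [hc, ENNReal.ofReal_eq_zero, not_le.2 hℓ]
      _ ≤ ∑' n, ∫⁻ x in Ico (t n) (t n + ℓ), f x := by
          refine ENNReal.tsum_le_tsum fun n => ?_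
          have h1 : ∫⁻ _ in Ico (t n) (t n + ℓ), c = c * ENNReal.ofReal ℓ := by
            rw [setLIntegral_const, Real.volume_Ico, add_sub_cancel_left]
          rw [← h1]
          exact setLIntegral_mono' measurableSet_Ico (hf n)
      _ = ∫⁻ x in ⋃ n, Ico (t n) (t n + ℓ), f x :=
          (lintegral_iUnion (fun _ => measurableSet_Ico) hdisj f).symm
      _ ≤ ∫⁻ x in Ioi (0:ℝ), f x := lintegral_mono_set hsub
  exact top_le_iff.1 htop

/-- If the derivative exceeds a large value `M` at some point, then the integral of
`g ∘ φ` is bounded below accordingly. -/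
lemma bbl_point (g : ℝ → ℝ) (hg1 : ∀ x : ℝ, 1 ≤ |x| → g 1 ≤ g x)
    (φ φ' : ℝ → ℝ)
    (hφ : ∀ t ∈ Ici (0:ℝ), HasDerivWithinAt φ (φ' t) (Ici (0:ℝ)) t)
    (K' : ℝ) (hK : 1 ≤ K')
    (hLip : ∀ s ∈ Ici (0:ℝ), ∀ t ∈ Ici (0:ℝ), |φ' s - φ' t| ≤ K' * |s - t|)
    {t₀ M : ℝ} (ht₀ : 0 ≤ t₀) (hM : 64 * K' ≤ M ^ 2) (hMpos : 0 < M)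
    (hM' : M ≤ φ' t₀) :
    ENNReal.ofReal (g 1) * ENNReal.ofReal (M / (8 * K')) ≤
      ∫⁻ s in Ioi (0:ℝ), ENNReal.ofReal (g (φ s)) := by
  have hK0 : (0:ℝ) < K' := lt_of_lt_of_le one_pos hK
  set L : ℝ := M / (2 * K') with hLdef
  have hL : 0 < L := div_pos hMpos (by positivity)
  have hL4 : M / (8 * K') = L / 4 := by rw [hLdef]; ring
  have hquarter : 8 / M ≤ L / 4 := by
    rw [← hL4, div_le_div_iff₀ hMpos (by positivity)]
    nlinarith
  have hKL : K' * L = M / 2 := by rw [hLdef]; field_simp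
  have hds : ∀ t ∈ Icc t₀ (t₀ + L), M / 2 ≤ φ' t := by
    intro t ht
    have h0t : (0:ℝ) ≤ t := ht₀.trans ht.1
    have habs := hLip t h0t t₀ ht₀
    rw [abs_of_nonneg (sub_nonneg.2 ht.1)] at habs
    have h1 : φ' t₀ - φ' t ≤ K' * (t - t₀) := (abs_le.1 habs).1 |> fun h => by linarith [neg_le.1 h]
    have h2 : K' * (t - t₀) ≤ K' * L := by
      have : t - t₀ ≤ L := by linarith [ht.2]
      exact mul_le_mul_of_nonneg_left this hK0.le
    linarith [hKL]
  have hmono2 : ∀ a b, t₀ ≤ a → a ≤ b → b ≤ t₀ + L → M / 2 * (b - a) ≤ φ b - φ a :=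
    fun a b h1 h2 h3 => bbl_mono_bound φ φ' hφ (ht₀.trans h1) h2
      (fun t ht => hds t ⟨h1.trans ht.1, ht.2.trans h3⟩)
  set mid : ℝ := t₀ + L / 2 with hmid
  obtain ⟨u, hu0, hgu⟩ : ∃ u : ℝ, 0 ≤ u ∧ ∀ x ∈ Ioc u (u + L / 4), g 1 ≤ g (φ x) := by
    by_cases hcase : -1 ≤ φ mid
    · refine ⟨mid + 8 / M, by positivity, fun x hx => ?_⟩
      have h8 : (0:ℝ) < 8 / M := by positivity
      have hxmid : mid ≤ x :=
        le_of_lt (lt_of_le_of_lt (le_add_of_nonneg_right h8.le) hx.1)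
      have hxle : x ≤ t₀ + L := by
        have := hx.2; rw [hmid] at this; linarith [hquarter]
      have hkey := hmono2 mid x (by rw [hmid]; linarith) hxmid hxle
      have hxgap : 8 / M ≤ x - mid := by linarith [hx.1]
      have h4 : (4:ℝ) ≤ M / 2 * (x - mid) := by
        have := mul_le_mul_of_nonneg_left hxgap (by positivity : (0:ℝ) ≤ M / 2)
        calc (4:ℝ) = M / 2 * (8 / M) := by field_simp; ring
          _ ≤ M / 2 * (x - mid) := this
      have : (1:ℝ) ≤ φ x := by linarith
      exact hg1 _ (by rw [abs_of_nonneg (by linarith)]; linarith)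
    · refine ⟨t₀, ht₀, fun x hx => ?_⟩
      push_neg at hcase
      have hxt₀ : t₀ ≤ x := hx.1.le
      have hxmid : x ≤ mid := by
        have := hx.2; rw [hmid]; linarith
      have hkey := hmono2 x mid hxt₀ hxmid (by rw [hmid]; linarith)
      have hmx : 0 ≤ M / 2 * (mid - x) := by
        have : 0 ≤ mid - x := by linarith
        positivity
      have : φ x ≤ -1 := by linarith
      exact hg1 _ (by rw [abs_of_nonpos (by linarith)]; linarith)
  rw [hL4]
  calc ENNReal.ofReal (g 1) * ENNReal.ofReal (L / 4)
      = ∫⁻ _ in Ioc u (u + L / 4), ENNReal.ofReal (g 1) := by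
        rw [setLIntegral_const, Real.volume_Ioc, add_sub_cancel_left]
    _ ≤ ∫⁻ x in Ioc u (u + L / 4), ENNReal.ofReal (g (φ x)) :=
        setLIntegral_mono' measurableSet_Ioc
          (fun x hx => ENNReal.ofReal_le_ofReal (hgu x hx))
    _ ≤ ∫⁻ x in Ioi (0:ℝ), ENNReal.ofReal (g (φ x)) :=
        lintegral_mono_set (fun x hx => lt_of_le_of_lt hu0 hx.1)

/-- the variant of Barbălat's lemma.  If `g` is of class `MK` (continuous,
null at `0`, even, strictly increasing on `[0,∞)`, nonnegative), `φ : [0,∞) → ℝ` is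
differentiable with Lipschitz derivative `φ'`, and `∫₀^∞ g(φ(s)) ds < ∞`, then
`φ(s) → 0` and `φ'(s) → 0` as `s → ∞`. -/
theorem barbalat_variant (g : ℝ → ℝ) (hgc : Continuous g) (hg0 : g 0 = 0)
    (hgnn : ∀ x, 0 ≤ g x) (hgeven : ∀ x, g (-x) = g x)
    (hgmono : StrictMonoOn g (Ici (0:ℝ)))
    (φ φ' : ℝ → ℝ)
    (hφ : ∀ t ∈ Ici (0:ℝ), HasDerivWithinAt φ (φ' t) (Ici (0:ℝ)) t)
    (K : NNReal) (hφ' : LipschitzOnWith K φ' (Ici (0:ℝ)))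
    (hint : (∫⁻ s in Ioi (0:ℝ), ENNReal.ofReal (g (φ s))) < ⊤) :
    Tendsto φ atTop (𝓝 0) ∧ Tendsto φ' atTop (𝓝 0) := by
  -- basic facts about `g`
  have habsg : ∀ x : ℝ, g |x| = g x := by
    intro x
    rcases abs_cases x with ⟨h, _⟩ | ⟨h, _⟩
    · rw [h]
    · rw [h, hgeven]
  have hgabs : ∀ c x : ℝ, 0 ≤ c → c ≤ |x| → g c ≤ g x := by
    intro c x hc hcx
    calc g c ≤ g |x| := hgmono.monotoneOn (mem_Ici.2 hc) (mem_Ici.2 (abs_nonneg x)) hcx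
      _ = g x := habsg x
  have hgpos : ∀ c : ℝ, 0 < c → 0 < g c := by
    intro c hc
    have := hgmono (mem_Ici.2 le_rfl) (mem_Ici.2 hc.le) hc
    rwa [hg0] at this
  have hg1 : ∀ x : ℝ, 1 ≤ |x| → g 1 ≤ g x := fun x hx => hgabs 1 x zero_le_one hx
  have hg1pos : 0 < g 1 := hgpos 1 one_pos
  -- the Lipschitz constant, bumped to be at least 1
  set K' : ℝ := max (K : ℝ) 1 with hK'def
  have hK : 1 ≤ K' := le_max_right _ _
  have hK0 : (0:ℝ) < K' := lt_of_lt_of_le one_pos hK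
  have hLip : ∀ s ∈ Ici (0:ℝ), ∀ t ∈ Ici (0:ℝ), |φ' s - φ' t| ≤ K' * |s - t| := by
    intro s hs t ht
    have h1 := hφ'.dist_le_mul s hs t ht
    rw [Real.dist_eq, Real.dist_eq] at h1
    calc |φ' s - φ' t| ≤ (K : ℝ) * |s - t| := h1
      _ ≤ K' * |s - t| := mul_le_mul_of_nonneg_right (le_max_left _ _) (abs_nonneg _)
  -- data about the integral
  set I : ℝ≥0∞ := ∫⁻ s in Ioi (0:ℝ), ENNReal.ofReal (g (φ s)) with hIdef
  set Ir : ℝ := I.toReal with hIr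
  have hIrnn : 0 ≤ Ir := ENNReal.toReal_nonneg
  -- the uniform bound on the derivative
  set M₀ : ℝ := max (Real.sqrt (64 * K')) (8 * K' * (Ir + 1) / g 1) with hM₀def
  have hsqrtpos : 0 < Real.sqrt (64 * K') := Real.sqrt_pos.2 (by positivity)
  have hM₀pos : 0 < M₀ := lt_of_lt_of_le hsqrtpos (le_max_left _ _)
  have hM₀sq : 64 * K' ≤ M₀ ^ 2 := by
    have hs := Real.sq_sqrt (by positivity : (0:ℝ) ≤ 64 * K')
    have h1 : Real.sqrt (64 * K') ≤ M₀ := le_max_left _ _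
    nlinarith [Real.sqrt_nonneg (64 * K')]
  have hbound : ∀ (ψ ψ' : ℝ → ℝ),
      (∀ t ∈ Ici (0:ℝ), HasDerivWithinAt ψ (ψ' t) (Ici (0:ℝ)) t) →
      (∀ s ∈ Ici (0:ℝ), ∀ t ∈ Ici (0:ℝ), |ψ' s - ψ' t| ≤ K' * |s - t|) →
      (∫⁻ s in Ioi (0:ℝ), ENNReal.ofReal (g (ψ s))) = I →
      ∀ t₀, 0 ≤ t₀ → ψ' t₀ ≤ M₀ := by
    intro ψ ψ' h1 h2 h3 t₀ ht₀
    by_contra hcon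
    push_neg at hcon
    have hpt := bbl_point g hg1 ψ ψ' h1 K' hK h2 ht₀ hM₀sq hM₀pos hcon.le
    rw [h3] at hpt
    have h5 : ENNReal.ofReal (g 1 * (M₀ / (8 * K'))) ≤ I := by
      rw [ENNReal.ofReal_mul hg1pos.le]; exact hpt
    have h6 : g 1 * (M₀ / (8 * K')) ≤ Ir :=
      (ENNReal.ofReal_le_iff_le_toReal hint.ne).1 h5
    have h7 : Ir + 1 ≤ g 1 * (M₀ / (8 * K')) := by
      have hle : 8 * K' * (Ir + 1) / g 1 ≤ M₀ := le_max_right _ _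
      have h8 : g 1 * ((8 * K' * (Ir + 1) / g 1) / (8 * K')) = Ir + 1 := by
        field_simp
      calc Ir + 1 = g 1 * ((8 * K' * (Ir + 1) / g 1) / (8 * K')) := h8.symm
        _ ≤ g 1 * (M₀ / (8 * K')) :=
            mul_le_mul_of_nonneg_left
              (div_le_div_of_nonneg_right hle (by positivity)) hg1pos.le
    linarith
  -- the two-sided bound `|φ'| ≤ M₀` on `[0,∞)`
  have hnegint : (∫⁻ s in Ioi (0:ℝ), ENNReal.ofReal (g (-φ s))) = I := by
    simp only [hgeven]; exact hIdef.symm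
  have hC : ∀ t : ℝ, 0 ≤ t → |φ' t| ≤ M₀ := by
    intro t ht
    rw [abs_le]
    constructor
    · have := hbound (fun s => -φ s) (fun s => -φ' s)
        (fun u hu => (hφ u hu).neg)
        (fun u hu v hv => by
          simpa only [neg_sub_neg, abs_sub_comm (φ' v) (φ' u)] using hLip u hu v hv)
        hnegint t ht
      have h9 : -φ' t ≤ M₀ := this
      linarith
    · exact hbound φ φ' hφ hLip rfl t ht
  -- a two-sided increment bound for `φ`
  have hdiff : ∀ t s : ℝ, 0 ≤ t → t ≤ s → |φ s - φ t| ≤ M₀ * (s - t) := by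
    intro t s h0 hts
    have hlow := bbl_mono_bound φ φ' hφ h0 hts (m := -M₀)
      (fun u hu => (abs_le.1 (hC u (h0.trans hu.1))).1)
    have hup := bbl_anti_bound φ φ' hφ h0 hts (M := M₀)
      (fun u hu => (abs_le.1 (hC u (h0.trans hu.1))).2)
    rw [abs_le]
    constructor <;> [linarith; linarith]
  -- Step 2: `φ → 0`
  have hφ0 : Tendsto φ atTop (𝓝 0) := by
    rw [Metric.tendsto_atTop]
    by_contra hcon
    push_neg at hcon
    obtain ⟨ε, hε, hfr⟩ := hcon
    set ℓ : ℝ := ε / (2 * M₀) with hℓdef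
    have hℓpos : 0 < ℓ := by positivity
    have hexists : ∀ b : ℝ, ∃ u, b ≤ u ∧ ε ≤ |φ u| := by
      intro b
      obtain ⟨u, hu1, hu2⟩ := hfr b
      refine ⟨u, hu1, ?_⟩
      rwa [Real.dist_eq, sub_zero] at hu2
    let T : ℕ → ℝ := fun n => Nat.rec ((hexists 1).choose)
      (fun _ ih => (hexists (ih + ℓ)).choose) n
    have hTs : ∀ n, T (n + 1) = (hexists (T n + ℓ)).choose := fun n => rfl
    have hgap : ∀ n, T n + ℓ ≤ T (n + 1) := by
      intro n; rw [hTs n]; exact (hexists _).choose_spec.1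
    have hTprop : ∀ n, 1 ≤ T n ∧ ε ≤ |φ (T n)| := by
      intro n
      induction n with
      | zero => exact ⟨(hexists 1).choose_spec.1, (hexists 1).choose_spec.2⟩
      | succ n ih =>
        have h := (hexists (T n + ℓ)).choose_spec
        rw [hTs n]
        exact ⟨by linarith [ih.1, h.1], h.2⟩
    have hf : ∀ n, ∀ x ∈ Ico (T n) (T n + ℓ),
        ENNReal.ofReal (g (ε / 2)) ≤ ENNReal.ofReal (g (φ x)) := by
      intro n x hx
      have h0 : (0:ℝ) ≤ T n := by linarith [(hTprop n).1]
      have hd := hdiff (T n) x h0 hx.1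
      have hCl : M₀ * (x - T n) ≤ ε / 2 := by
        have h1 : x - T n ≤ ℓ := by linarith [hx.2]
        have h2 : M₀ * (x - T n) ≤ M₀ * ℓ := mul_le_mul_of_nonneg_left h1 hM₀pos.le
        have h3 : M₀ * ℓ = ε / 2 := by rw [hℓdef]; field_simp
        linarith
      have h2 : ε / 2 ≤ |φ x| := by
        have ht := (hTprop n).2
        have habs2 : |φ (T n)| - |φ x| ≤ |φ x - φ (T n)| := by
          have := abs_sub_abs_le_abs_sub (φ (T n)) (φ x)
          rwa [abs_sub_comm] at this
        linarith
      exact ENNReal.ofReal_le_ofReal (hgabs (ε / 2) (φ x) (by linarith) h2)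
    have htop := bbl_lintegral_top (fun s => ENNReal.ofReal (g (φ s))) hℓpos
      (c := ENNReal.ofReal (g (ε / 2)))
      (ne_of_gt (ENNReal.ofReal_pos.2 (hgpos _ (by linarith))))
      (by linarith [(hTprop 0).1]) hgap hf
    exact hint.ne htop
  refine ⟨hφ0, ?_⟩
  -- Step 3: `φ' → 0`
  rw [Metric.tendsto_atTop]
  intro ε hε
  set δ : ℝ := ε / (2 * K') with hδdef
  have hδpos : 0 < δ := by positivity
  obtain ⟨N₀, hN₀⟩ := Metric.tendsto_atTop.1 hφ0 (ε * δ / 8) (by positivity)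
  refine ⟨max N₀ 0, fun t ht => ?_⟩
  have htN₀ : N₀ ≤ t := le_trans (le_max_left _ _) ht
  have ht0 : (0:ℝ) ≤ t := le_trans (le_max_right _ _) ht
  have hsmall : ∀ s, t ≤ s → |φ s| < ε * δ / 8 := by
    intro s hs
    have := hN₀ s (htN₀.trans hs)
    rwa [Real.dist_eq, sub_zero] at this
  rw [Real.dist_eq, sub_zero]
  by_contra hcon
  push_neg at hcon
  have hKδ : K' * δ = ε / 2 := by rw [hδdef]; field_simp
  have hεδ : 0 < ε * δ := mul_pos hε hδpos
  have hs1 := hsmall t le_rfl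
  have hs2 := hsmall (t + δ) (by linarith)
  rcases le_or_gt 0 (φ' t) with hsign | hsign
  · -- φ' t ≥ ε
    rw [abs_of_nonneg hsign] at hcon
    have hder : ∀ u ∈ Icc t (t + δ), ε / 2 ≤ φ' u := by
      intro u hu
      have hl := hLip u (mem_Ici.2 (ht0.trans hu.1)) t (mem_Ici.2 ht0)
      rw [abs_of_nonneg (sub_nonneg.2 hu.1)] at hl
      have h1 := (abs_le.1 hl).1
      have h2 : K' * (u - t) ≤ K' * δ := mul_le_mul_of_nonneg_left
        (by linarith [hu.2]) hK0.le
      linarith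
    have hmb := bbl_mono_bound φ φ' hφ ht0 (le_add_of_nonneg_right hδpos.le) hder
    rw [add_sub_cancel_left] at hmb
    nlinarith [le_abs_self (φ (t + δ)), neg_abs_le (φ t)]
  · -- φ' t ≤ -ε
    rw [abs_of_neg hsign] at hcon
    have hder : ∀ u ∈ Icc t (t + δ), φ' u ≤ -(ε / 2) := by
      intro u hu
      have hl := hLip u (mem_Ici.2 (ht0.trans hu.1)) t (mem_Ici.2 ht0)
      rw [abs_of_nonneg (sub_nonneg.2 hu.1)] at hl
      have h1 := (abs_le.1 hl).2
      have h2 : K' * (u - t) ≤ K' * δ := mul_le_mul_of_nonneg_left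
        (by linarith [hu.2]) hK0.le
      linarith
    have hmb := bbl_anti_bound φ φ' hφ ht0 (le_add_of_nonneg_right hδpos.le) hder
    rw [add_sub_cancel_left] at hmb
    nlinarith [neg_abs_le (φ (t + δ)), le_abs_self (φ t)]
end

section
/- Let L(x) := (x+2)²(x−2)²x²(x+1)²(x−1)² and let ℳ be the set of measurable functions u : [0,∞) → [−1,1]. For j = 1, 2 define v_j(x) := inf{ ∫₀^{t_{⋆j}} L(φ(s)) ds : u ∈ ℳ, φ locally absolutely continuous with φ(0) = x and φ' = u a.e., t_{⋆j} := inf{t ≥ 0 : φ(t) ∈ T_j} < ∞ }, where T₁ = {0} and T₂ = {0, 2, −2}. Then v₁ and v₂ are both finite, continuous, nonnegative, and vanish at 0; each is a viscosity solution of |w'(x)| = L(x) on ℝ ∖ {0}; and v₁ ≠ v₂ (in particular v₂(2) = 0 < v₁(2)). Hence the equation |w'(x)| = L(x) on ℝ ∖ {0} admits more than one bounded-from-below continuous viscosity solution vanishing on the target {0}. -/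
open MeasureTheory Set Filter Topology
open scoped ENNReal

noncomputable section

/-- The Lagrangian `L(x) = (x+2)²(x−2)²x²(x+1)²(x−1)²`. -/
def LagL (x : ℝ) : ℝ := (x+2)^2 * (x-2)^2 * x^2 * (x+1)^2 * (x-1)^2

/-- Viscosity solution of `F(x, w'(x)) = 0` on the open set `G ⊆ ℝ`. -/
def IsViscositySol1 (F : ℝ → ℝ → ℝ) (G : Set ℝ) (w : ℝ → ℝ) : Prop :=
  (∀ γ : ℝ → ℝ, ContDiffOn ℝ 1 γ G → ∀ x₀ ∈ G,
      IsLocalMinOn (fun x => w x - γ x) G x₀ → 0 ≤ F x₀ (deriv γ x₀)) ∧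
  (∀ γ : ℝ → ℝ, ContDiffOn ℝ 1 γ G → ∀ x₁ ∈ G,
      IsLocalMaxOn (fun x => w x - γ x) G x₁ → F x₁ (deriv γ x₁) ≤ 0)

/-- The exit time value function for the dynamics `ẋ = u`, `u ∈ [−1,1]`, Lagrangian
`LagL` and target `T`, as an extended real. -/
def fullerVal (T : Set ℝ) (x : ℝ) : EReal :=
  sInf { c : EReal | ∃ u φ : ℝ → ℝ, Measurable u ∧ (∀ t, u t ∈ Icc (-1:ℝ) 1) ∧
      Continuous φ ∧ φ 0 = x ∧ (∀ t, 0 ≤ t → φ t = x + ∫ s in (0:ℝ)..t, u s) ∧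
      {t : ℝ | 0 ≤ t ∧ φ t ∈ T}.Nonempty ∧
      c = ((∫⁻ s in Ioc (0:ℝ) (sInf {t : ℝ | 0 ≤ t ∧ φ t ∈ T}),
            ENNReal.ofReal (LagL (φ s))) : EReal) }

lemma lagL_nonneg (x : ℝ) : 0 ≤ LagL x := by unfold LagL; positivity
lemma lagL_cont : Continuous LagL := by unfold LagL; continuity
lemma lagL_zero : LagL 0 = 0 := by norm_num [LagL]
lemma lagL_two : LagL 2 = 0 := by norm_num [LagL]
lemma lagL_negtwo : LagL (-2) = 0 := by norm_num [LagL]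

def Gfun (x : ℝ) : ℝ := ∫ y in (0:ℝ)..x, LagL y

lemma G_hasDerivAt (x : ℝ) : HasDerivAt Gfun (LagL x) x :=
  intervalIntegral.integral_hasDerivAt_right (lagL_cont.intervalIntegrable _ _)
    (lagL_cont.stronglyMeasurableAtFilter _ _) lagL_cont.continuousAt

lemma G_cont : Continuous Gfun := by
  have : Differentiable ℝ Gfun := fun x => (G_hasDerivAt x).differentiableAt
  exact this.continuous

lemma G_sub (a b : ℝ) : Gfun b - Gfun a = ∫ y in a..b, LagL y := by
  have := intervalIntegral.integral_add_adjacent_intervals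
    (lagL_cont.intervalIntegrable (μ := volume) 0 a) (lagL_cont.intervalIntegrable a b)
  unfold Gfun; linarith

lemma G_mono : Monotone Gfun := by
  intro a b hab
  have h : 0 ≤ Gfun b - Gfun a := by
    rw [G_sub]
    exact intervalIntegral.integral_nonneg hab (fun x _ => lagL_nonneg x)
  linarith

lemma lagL_pos {x : ℝ} (h0 : x ≠ 0) (h1 : x ≠ 1) (h1' : x ≠ -1) (h2 : x ≠ 2) (h2' : x ≠ -2) :
    0 < LagL x := by
  have h3 : x + 2 ≠ 0 := by intro h; apply h2'; linarith
  have h4 : x + 1 ≠ 0 := by intro h; apply h1'; linarith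
  have h5 : x - 2 ≠ 0 := by intro h; apply h2; linarith
  have h6 : x - 1 ≠ 0 := by intro h; apply h1; linarith
  unfold LagL
  positivity

lemma G_strictMono : StrictMono Gfun := by
  intro a b hab
  have key : 0 < ∫ y in Ioc a b, LagL y := by
    rw [MeasureTheory.setIntegral_pos_iff_support_of_nonneg_ae
      (Filter.Eventually.of_forall (fun x => lagL_nonneg x))
      (lagL_cont.integrableOn_Ioc)]
    · have hsub : Ioc a b \ ({0, 1, -1, 2, -2} : Set ℝ) ⊆ Function.support LagL ∩ Ioc a b := by
        intro y hy
        simp only [Set.mem_diff, Set.mem_insert_iff, Set.mem_singleton_iff, not_or] at hy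
        obtain ⟨hy1, r0, r1, r1', r2, r2'⟩ := hy
        exact ⟨(lagL_pos r0 r1 r1' r2 r2').ne', hy1⟩
      have hS : (volume : Measure ℝ) ({0, 1, -1, 2, -2} : Set ℝ) = 0 := by
        exact Set.Finite.measure_zero (Set.toFinite _) _
      calc (0:ENNReal) < volume (Ioc a b) := by
              simp [Real.volume_Ioc]; linarith
        _ = volume (Ioc a b \ ({0, 1, -1, 2, -2} : Set ℝ)) :=
              (measure_diff_null hS).symm
        _ ≤ volume (Function.support LagL ∩ Ioc a b) := measure_mono hsub
  have h : 0 < Gfun b - Gfun a := by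
    rw [G_sub, intervalIntegral.integral_of_le hab.le]
    exact key
  linarith
lemma keyA (φ : ℝ → ℝ) (hφ : Continuous φ) (τ : ℝ) (hτ : 0 ≤ τ)
    (hlip : ∀ s t, 0 ≤ s → s ≤ t → t ≤ τ → |φ t - φ s| ≤ t - s) :
    |Gfun (φ τ) - Gfun (φ 0)| ≤ ∫ s in (0:ℝ)..τ, LagL (φ s) := by
  have hLφ : Continuous fun s => LagL (φ s) := lagL_cont.comp hφ
  have hint : ∀ a b : ℝ, IntervalIntegrable (fun s => LagL (φ s)) volume a b :=
    fun a b => hLφ.intervalIntegrable a b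
  have hprim : Continuous fun t => ∫ s in (0:ℝ)..t, LagL (φ s) :=
    intervalIntegral.continuous_primitive hint 0
  refine le_of_forall_pos_le_add fun ε hε => ?_
  set ε' := ε / (2 * τ + 1) with hε'def
  have hε' : 0 < ε' := by positivity
  -- compact set containing the trajectory
  set K := Icc (φ 0 - τ) (φ 0 + τ) with hK
  have hmemK : ∀ s, 0 ≤ s → s ≤ τ → φ s ∈ K := by
    intro s h0 h1
    have := hlip 0 s le_rfl h0 h1
    rw [abs_le] at this
    constructor <;> [linarith [this.1]; linarith [this.2]]
  -- uniform continuity of LagL on K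
  obtain ⟨δ, hδpos, hδ⟩ := Metric.uniformContinuousOn_iff.1
    ((isCompact_Icc).uniformContinuousOn_of_continuous lagL_cont.continuousOn) ε' hε'
  set A := Icc 0 τ ∩ {t : ℝ | |Gfun (φ t) - Gfun (φ 0)| ≤ (∫ s in (0:ℝ)..t, LagL (φ s)) + 2 * ε' * t}
    with hA
  have hA0 : (0:ℝ) ∈ A := by
    constructor
    · exact ⟨le_rfl, hτ⟩
    · simp [intervalIntegral.integral_same]
  have hAcpt : IsCompact A := by
    apply isCompact_Icc.inter_right
    apply isClosed_le
    · exact ((G_cont.comp hφ).sub continuous_const).abs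
    · exact hprim.add (continuous_const.mul continuous_id)
  set σ := sSup A with hσ
  have hσA : σ ∈ A := hAcpt.sSup_mem ⟨0, hA0⟩
  have hστ : σ = τ := by
    by_contra hne
    have hσlt : σ < τ := lt_of_le_of_ne hσA.1.2 hne
    set t' := min (σ + δ / 2) τ with ht'
    have hσt' : σ < t' := lt_min (by linarith) hσlt
    have ht'τ : t' ≤ τ := min_le_right _ _
    have ht'σδ : t' - σ ≤ δ / 2 := by
      have := min_le_left (σ + δ / 2) τ; linarith
    have hσ0 : 0 ≤ σ := hσA.1.1
    -- both φ σ and nearby values are in K, within δ of φ σ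
    have hφσK : φ σ ∈ K := hmemK σ hσ0 hσA.1.2
    -- small-step bound on |G (φ t') - G (φ σ)|
    have hφclose : |φ t' - φ σ| ≤ t' - σ := hlip σ t' hσ0 hσt'.le ht'τ
    have hGstep : |Gfun (φ t') - Gfun (φ σ)| ≤ (LagL (φ σ) + ε') * (t' - σ) := by
      rw [G_sub]
      have hb : ∀ y ∈ Set.uIoc (φ σ) (φ t'), ‖LagL y‖ ≤ LagL (φ σ) + ε' := by
        intro y hy
        have hy' : y ∈ Set.uIcc (φ σ) (φ t') := Set.uIoc_subset_uIcc hy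
        rw [Set.uIcc_eq_union] at hy'
        have hyd : |y - φ σ| ≤ |φ t' - φ σ| := by
          rcases hy' with h | h
          · rw [Set.mem_Icc] at h
            rw [abs_sub_le_iff]; constructor
            · calc y - φ σ ≤ φ t' - φ σ := by linarith [h.2]
                _ ≤ |φ t' - φ σ| := le_abs_self _
            · calc φ σ - y ≤ 0 := by linarith [h.1]
                _ ≤ |φ t' - φ σ| := abs_nonneg _
          · rw [Set.mem_Icc] at h
            rw [abs_sub_le_iff]; constructor
            · calc y - φ σ ≤ 0 := by linarith [h.2]
                _ ≤ |φ t' - φ σ| := abs_nonneg _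
            · calc φ σ - y ≤ φ σ - φ t' := by linarith [h.1]
                _ ≤ |φ t' - φ σ| := by rw [abs_sub_comm]; exact le_abs_self _
        have hyK : y ∈ K := by
          have h1 := hφσK
          have h2 : φ t' ∈ K := hmemK t' (by linarith) ht'τ
          rw [hK, Set.mem_Icc] at h1 h2 ⊢
          rcases hy' with h | h <;> rw [Set.mem_Icc] at h <;>
            exact ⟨by linarith [h.1, h1.1, h2.1], by linarith [h.2, h1.2, h2.2]⟩
        have hdist : dist y (φ σ) < δ := by
          rw [Real.dist_eq]
          calc |y - φ σ| ≤ |φ t' - φ σ| := hyd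
            _ ≤ t' - σ := hφclose
            _ ≤ δ / 2 := ht'σδ
            _ < δ := by linarith
        have := hδ y hyK (φ σ) hφσK hdist
        rw [Real.dist_eq] at this
        have h2 : LagL y - LagL (φ σ) ≤ ε' := by
          have := abs_le.1 this.le; linarith [this.2]
        rw [Real.norm_eq_abs, abs_of_nonneg (lagL_nonneg y)]
        linarith
      calc |∫ y in (φ σ)..(φ t'), LagL y| ≤ (LagL (φ σ) + ε') * |φ t' - φ σ| :=
            intervalIntegral.norm_integral_le_of_norm_le_const hb
        _ ≤ (LagL (φ σ) + ε') * (t' - σ) := by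
            apply mul_le_mul_of_nonneg_left (le_trans hφclose le_rfl)
            linarith [lagL_nonneg (φ σ)]
    -- lower bound on the integral over [σ, t']
    have hIstep : (LagL (φ σ) - ε') * (t' - σ) ≤ ∫ s in σ..t', LagL (φ s) := by
      have hconst : ∫ s in σ..t', (LagL (φ σ) - ε') = (LagL (φ σ) - ε') * (t' - σ) := by
        simp [intervalIntegral.integral_const, smul_eq_mul]; ring
      rw [← hconst]
      apply intervalIntegral.integral_mono_on hσt'.le
        (intervalIntegrable_const) (hint σ t')
      intro r hr
      have hrK : φ r ∈ K := hmemK r (by linarith [hr.1]) (le_trans hr.2 ht'τ)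
      have hrd : dist (φ r) (φ σ) < δ := by
        rw [Real.dist_eq]
        calc |φ r - φ σ| ≤ r - σ := hlip σ r hσ0 hr.1 (le_trans hr.2 ht'τ)
          _ ≤ δ / 2 := by linarith [hr.2, ht'σδ]
          _ < δ := by linarith
      have := hδ (φ r) hrK (φ σ) hφσK hrd
      rw [Real.dist_eq] at this
      have := abs_le.1 this.le
      linarith [this.1]
    -- conclude t' ∈ A
    have ht'A : t' ∈ A := by
      constructor
      · exact ⟨by linarith, ht'τ⟩
      · have hadd : (∫ s in (0:ℝ)..σ, LagL (φ s)) + ∫ s in σ..t', LagL (φ s)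
            = ∫ s in (0:ℝ)..t', LagL (φ s) :=
          intervalIntegral.integral_add_adjacent_intervals (hint 0 σ) (hint σ t')
        have hσineq := hσA.2
        simp only [Set.mem_setOf_eq] at hσineq ⊢
        calc |Gfun (φ t') - Gfun (φ 0)|
            ≤ |Gfun (φ t') - Gfun (φ σ)| + |Gfun (φ σ) - Gfun (φ 0)| := by
              have := abs_sub_le (Gfun (φ t')) (Gfun (φ σ)) (Gfun (φ 0)); linarith
          _ ≤ (LagL (φ σ) + ε') * (t' - σ) + ((∫ s in (0:ℝ)..σ, LagL (φ s)) + 2 * ε' * σ) := by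
              linarith
          _ ≤ ((∫ s in σ..t', LagL (φ s)) + 2 * ε' * (t' - σ))
              + ((∫ s in (0:ℝ)..σ, LagL (φ s)) + 2 * ε' * σ) := by
              have : (LagL (φ σ) + ε') * (t' - σ)
                  = (LagL (φ σ) - ε') * (t' - σ) + 2 * ε' * (t' - σ) := by ring
              linarith
          _ = (∫ s in (0:ℝ)..t', LagL (φ s)) + 2 * ε' * t' := by rw [← hadd]; ring
    exact absurd (le_csSup hAcpt.bddAbove ht'A) (not_le.2 hσt')
  have hfinal := hσA.2
  rw [hστ] at hfinal
  simp only [Set.mem_setOf_eq] at hfinal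
  have : 2 * ε' * τ ≤ ε := by
    have h1 : (0:ℝ) < 2 * τ + 1 := by positivity
    calc 2 * ε' * τ = ε * (2 * τ / (2 * τ + 1)) := by rw [hε'def]; ring
      _ ≤ ε * 1 := mul_le_mul_of_nonneg_left ((div_le_one h1).2 (by linarith)) hε.le
      _ = ε := mul_one ε
  linarith
lemma step_integral (σ T₀ : ℝ) (t : ℝ) (h0 : 0 ≤ t) (h1 : t ≤ T₀) :
    (∫ s in (0:ℝ)..t, if s < T₀ then σ else 0) = σ * t := by
  rw [intervalIntegral.integral_of_le h0, MeasureTheory.integral_Ioc_eq_integral_Ioo,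
    MeasureTheory.setIntegral_congr_fun measurableSet_Ioo
      (fun s hs => if_pos (lt_of_lt_of_le hs.2 h1) : EqOn _ (fun _ => σ) (Ioo 0 t))]
  simp [Real.volume_Ioo, mul_comm, ENNReal.toReal_ofReal h0, h0]

lemma tail_integral (σ T₀ : ℝ) (t : ℝ) (h1 : T₀ ≤ t) :
    (∫ s in T₀..t, if s < T₀ then σ else 0) = 0 := by
  rw [intervalIntegral.integral_of_le h1,
    MeasureTheory.setIntegral_congr_fun measurableSet_Ioc
      (fun s hs => if_neg (not_lt.2 hs.1.le) : EqOn _ (fun _ => (0:ℝ)) (Ioc T₀ t))]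
  simp

theorem fullerVal_eq (T : Set ℝ) (hT : IsClosed T) (x : ℝ) (v : ℝ)
    (hv0 : 0 ≤ v) (hlb : ∀ a ∈ T, v ≤ |Gfun x - Gfun a|)
    (hub : ∃ a ∈ T, |Gfun x - Gfun a| = v) :
    fullerVal T x = (v : EReal) := by
  unfold fullerVal
  apply le_antisymm
  · -- upper bound: explicit control
    obtain ⟨a, haT, hav⟩ := hub
    set σ : ℝ := if a < x then -1 else 1 with hσdef
    set T₀ : ℝ := |a - x| with hT₀def
    have hT₀ : 0 ≤ T₀ := abs_nonneg _
    have hσT₀ : σ * T₀ = a - x := by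
      rw [hσdef, hT₀def]
      rcases lt_or_ge a x with h | h
      · rw [if_pos h, abs_of_neg (by linarith : a - x < 0)]; ring
      · rw [if_neg (not_lt.2 h), abs_of_nonneg (by linarith : 0 ≤ a - x)]; ring
    have hu : Measurable (fun s => if s < T₀ then σ else 0 : ℝ → ℝ) :=
      Measurable.ite measurableSet_Iio measurable_const measurable_const
    have hσ1 : |σ| = 1 := by
      rw [hσdef]; rcases lt_or_ge a x with h | h
      · rw [if_pos h]; norm_num
      · rw [if_neg (not_lt.2 h)]; norm_num
    have hubd : ∀ t, (if t < T₀ then σ else 0) ∈ Icc (-1:ℝ) 1 := by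
      intro t
      by_cases h : t < T₀
      · simp only [if_pos h]
        have := abs_le.1 hσ1.le; exact ⟨this.1, this.2⟩
      · simp only [if_neg h]; constructor <;> norm_num
    set φ : ℝ → ℝ := fun t => x + σ * min t T₀ with hφdef
    have hφc : Continuous φ :=
      continuous_const.add (continuous_const.mul (continuous_id.min continuous_const))
    have hφ0 : φ 0 = x := by simp [hφdef, min_eq_left hT₀]
    have hφeq : ∀ t, 0 ≤ t → φ t = x + ∫ s in (0:ℝ)..t, if s < T₀ then σ else 0 := by
      intro t ht
      rcases le_or_gt t T₀ with h | h
      · rw [step_integral σ T₀ t ht h, hφdef]; simp [min_eq_left h, mul_comm]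
      · have huint : ∀ a b : ℝ, IntervalIntegrable (fun s => if s < T₀ then σ else 0 : ℝ → ℝ) volume a b := by
          intro a b
          rw [intervalIntegrable_iff]
          refine MeasureTheory.Integrable.mono' (g := fun _ => (1:ℝ))
            (MeasureTheory.integrableOn_const measure_Ioc_lt_top.ne)
            hu.aestronglyMeasurable.restrict
            (Filter.Eventually.of_forall fun t => ?_)
          rw [Real.norm_eq_abs]
          by_cases hc : t < T₀
          · rw [if_pos hc, hσ1]
          · rw [if_neg hc]; norm_num
        have hadd := intervalIntegral.integral_add_adjacent_intervals
          (huint 0 T₀) (huint T₀ t)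
        rw [← hadd, step_integral σ T₀ T₀ hT₀ le_rfl, tail_integral σ T₀ t h.le, hφdef]
        simp [min_eq_right h.le]
    have hhit : φ T₀ = a := by rw [hφdef]; simp only [min_self]; linarith [hσT₀]
    have hne : {t : ℝ | 0 ≤ t ∧ φ t ∈ T}.Nonempty := ⟨T₀, hT₀, by rw [hhit]; exact haT⟩
    set τ := sInf {t : ℝ | 0 ≤ t ∧ φ t ∈ T} with hτdef
    have hτT₀ : τ ≤ T₀ := csInf_le ⟨0, fun t ht => ht.1⟩ ⟨hT₀, by rw [hhit]; exact haT⟩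
    apply sInf_le_of_le (b := ((∫⁻ s in Ioc (0:ℝ) τ, ENNReal.ofReal (LagL (φ s))) : EReal))
    · exact ⟨_, φ, hu, hubd, hφc, hφ0, hφeq, hne, rfl⟩
    · have hmono : (∫⁻ s in Ioc (0:ℝ) τ, ENNReal.ofReal (LagL (φ s)))
          ≤ ∫⁻ s in Ioc (0:ℝ) T₀, ENNReal.ofReal (LagL (φ s)) :=
        lintegral_mono_set (Ioc_subset_Ioc le_rfl hτT₀)
      have hlin : (∫⁻ s in Ioc (0:ℝ) T₀, ENNReal.ofReal (LagL (φ s)))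
          = ENNReal.ofReal (∫ s in Ioc (0:ℝ) T₀, LagL (φ s)) :=
        (MeasureTheory.ofReal_integral_eq_lintegral_ofReal
          ((lagL_cont.comp hφc).integrableOn_Ioc)
          (Filter.Eventually.of_forall fun s => lagL_nonneg _)).symm
      have hIval : (∫ s in Ioc (0:ℝ) T₀, LagL (φ s)) = v := by
        rw [← intervalIntegral.integral_of_le hT₀]
        have hcongr : (∫ s in (0:ℝ)..T₀, LagL (φ s)) = ∫ s in (0:ℝ)..T₀, LagL (x + σ * s) := by
          apply intervalIntegral.integral_congr
          intro s hs
          rw [Set.uIcc_of_le hT₀, Set.mem_Icc] at hs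
          rw [hφdef]; simp [min_eq_left hs.2]
        rw [hcongr, ← hav]
        rcases lt_or_ge a x with h | h
        · have hσv : σ = -1 := if_pos h
          have hT₀' : T₀ = x - a := by rw [hT₀def, abs_of_neg (by linarith : a - x < 0)]; ring
          have heq : (∫ s in (0:ℝ)..T₀, LagL (x + σ * s)) = ∫ s in (0:ℝ)..T₀, LagL (x - s) := by
            apply intervalIntegral.integral_congr; intro s _
            rw [hσv]; ring_nf
          rw [heq, intervalIntegral.integral_comp_sub_left LagL x, hT₀']
          rw [show x - (x - a) = a from by ring, show x - (0:ℝ) = x from by ring,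
            ← G_sub a x, abs_of_nonneg (by linarith [G_mono h.le] : 0 ≤ Gfun x - Gfun a)]
        · have hσv : σ = 1 := if_neg (not_lt.2 h)
          have hT₀' : T₀ = a - x := by rw [hT₀def, abs_of_nonneg (by linarith : 0 ≤ a - x)]
          have heq : (∫ s in (0:ℝ)..T₀, LagL (x + σ * s)) = ∫ s in (0:ℝ)..T₀, LagL (x + s) := by
            apply intervalIntegral.integral_congr; intro s _
            rw [hσv]; ring_nf
          rw [heq, intervalIntegral.integral_comp_add_left LagL x, hT₀']
          rw [show x + (a - x) = a from by ring, show x + (0:ℝ) = x from by ring,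
            abs_of_nonpos (by linarith [G_mono h] : Gfun x - Gfun a ≤ 0)]
          linarith [G_sub x a]
      calc ((∫⁻ s in Ioc (0:ℝ) τ, ENNReal.ofReal (LagL (φ s))) : EReal)
          ≤ ((∫⁻ s in Ioc (0:ℝ) T₀, ENNReal.ofReal (LagL (φ s))) : EReal) := by
            exact_mod_cast hmono
        _ = ((ENNReal.ofReal v : ℝ≥0∞) : EReal) := by rw [hlin, hIval]
        _ = ((max v 0 : ℝ) : EReal) := by rw [EReal.coe_ennreal_ofReal]
        _ = (v : EReal) := by rw [max_eq_left hv0]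
  · -- lower bound
    apply le_sInf
    rintro c ⟨u, φ, hu, hubd, hφc, hφ0, hφeq, hne, hceq⟩
    set H := {t : ℝ | 0 ≤ t ∧ φ t ∈ T} with hHdef
    have hHeq : H = Ici 0 ∩ φ ⁻¹' T := by
      ext t; simp [hHdef, Set.mem_Ici, Set.mem_preimage]
    have hHclosed : IsClosed H := by
      rw [hHeq]; exact isClosed_Ici.inter (hT.preimage hφc)
    have hbdd : BddBelow H := ⟨0, fun t ht => ht.1⟩
    set τ := sInf H with hτdef
    have hτH : τ ∈ H := hHclosed.csInf_mem hne hbdd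
    have hτ0 : 0 ≤ τ := hτH.1
    have hφτT : φ τ ∈ T := hτH.2
    -- integrability of u
    have huint : ∀ a b : ℝ, IntervalIntegrable u volume a b := by
      intro a b
      rw [intervalIntegrable_iff]
      refine MeasureTheory.Integrable.mono' (g := fun _ => (1:ℝ))
        (MeasureTheory.integrableOn_const measure_Ioc_lt_top.ne)
        hu.aestronglyMeasurable.restrict
        (Filter.Eventually.of_forall fun t => ?_)
      rw [Real.norm_eq_abs, abs_le]
      exact ⟨(hubd t).1, (hubd t).2⟩
    -- φ is 1-Lipschitz on [0, τ]
    have hlip : ∀ s t, 0 ≤ s → s ≤ t → t ≤ τ → |φ t - φ s| ≤ t - s := by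
      intro s t h0 h1 _
      rw [hφeq t (le_trans h0 h1), hφeq s h0]
      have hadd := intervalIntegral.integral_add_adjacent_intervals (huint 0 s) (huint s t)
      have : x + (∫ r in (0:ℝ)..t, u r) - (x + ∫ r in (0:ℝ)..s, u r) = ∫ r in s..t, u r := by
        rw [← hadd]; ring
      rw [this]
      have := intervalIntegral.norm_integral_le_of_norm_le_const
        (C := 1) (f := u) (a := s) (b := t) (fun r _ => by
          rw [Real.norm_eq_abs, abs_le]; exact ⟨(hubd r).1, (hubd r).2⟩)
      rw [Real.norm_eq_abs] at this
      calc |∫ r in s..t, u r| ≤ 1 * |t - s| := this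
        _ = t - s := by rw [one_mul, abs_of_nonneg (by linarith)]
    have hkey := keyA φ hφc τ hτ0 hlip
    rw [hφ0] at hkey
    -- identify the cost
    have hlin : (∫⁻ s in Ioc (0:ℝ) τ, ENNReal.ofReal (LagL (φ s)))
        = ENNReal.ofReal (∫ s in Ioc (0:ℝ) τ, LagL (φ s)) :=
      (MeasureTheory.ofReal_integral_eq_lintegral_ofReal
        ((lagL_cont.comp hφc).integrableOn_Ioc)
        (Filter.Eventually.of_forall fun s => lagL_nonneg _)).symm
    have hInonneg : 0 ≤ ∫ s in Ioc (0:ℝ) τ, LagL (φ s) :=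
      MeasureTheory.setIntegral_nonneg measurableSet_Ioc fun s _ => lagL_nonneg _
    have hvI : v ≤ ∫ s in Ioc (0:ℝ) τ, LagL (φ s) := by
      have h1 : v ≤ |Gfun x - Gfun (φ τ)| := hlb (φ τ) hφτT
      have h2 : |Gfun x - Gfun (φ τ)| = |Gfun (φ τ) - Gfun x| := abs_sub_comm _ _
      rw [← intervalIntegral.integral_of_le hτ0]
      linarith [hkey]
    rw [hceq, hlin]
    calc ((v : ℝ) : EReal) ≤ ((∫ s in Ioc (0:ℝ) τ, LagL (φ s) : ℝ) : EReal) := by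
          exact_mod_cast hvI
      _ = ((max (∫ s in Ioc (0:ℝ) τ, LagL (φ s)) 0 : ℝ) : EReal) := by
          rw [max_eq_left hInonneg]
      _ = ((ENNReal.ofReal (∫ s in Ioc (0:ℝ) τ, LagL (φ s)) : ℝ≥0∞) : EReal) := by
          rw [EReal.coe_ennreal_ofReal]

lemma branch_hasDerivAt (a : ℝ) (ha : LagL a = 0) (x : ℝ) :
    ∃ d, HasDerivAt (fun y => |Gfun y - Gfun a|) d x ∧ |d| = LagL x := by
  rcases lt_trichotomy x a with h | h | h
  · refine ⟨-(LagL x), ?_, by rw [abs_neg, abs_of_nonneg (lagL_nonneg x)]⟩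
    have hev : (fun y => |Gfun y - Gfun a|) =ᶠ[𝓝 x] fun y => Gfun a - Gfun y := by
      filter_upwards [Iio_mem_nhds h] with y hy
      rw [abs_of_neg (sub_neg.2 (G_strictMono hy))]; ring
    exact HasDerivAt.congr_of_eventuallyEq
      (((G_hasDerivAt x).const_sub (Gfun a)).congr_deriv (by ring)) hev
  · subst h
    refine ⟨0, ?_, by rw [abs_zero, ha]⟩
    rw [hasDerivAt_iff_tendsto_slope]
    have hG := G_hasDerivAt x
    rw [hasDerivAt_iff_tendsto_slope, ha] at hG
    have key : ∀ y : ℝ, |slope (fun z => |Gfun z - Gfun x|) x y| = |slope Gfun x y| := by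
      intro y
      rw [slope_def_field, slope_def_field, abs_div, abs_div]
      congr 1
      rw [show |Gfun y - Gfun x| - |Gfun x - Gfun x| = |Gfun y - Gfun x| by simp, abs_abs]
    have h1 : Tendsto (fun y => |slope Gfun x y|) (𝓝[≠] x) (𝓝 0) := by
      simpa using hG.abs
    have h2 : Tendsto (fun y => -|slope Gfun x y|) (𝓝[≠] x) (𝓝 0) := by
      simpa using h1.neg
    refine tendsto_of_tendsto_of_tendsto_of_le_of_le' h2 h1
      (Filter.Eventually.of_forall fun y => ?_) (Filter.Eventually.of_forall fun y => ?_)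
    · rw [← key y]; exact neg_abs_le _
    · rw [← key y]; exact le_abs_self _
  · refine ⟨LagL x, ?_, abs_of_nonneg (lagL_nonneg x)⟩
    have hev : (fun y => |Gfun y - Gfun a|) =ᶠ[𝓝 x] fun y => Gfun y - Gfun a := by
      filter_upwards [Ioi_mem_nhds h] with y hy
      rw [abs_of_pos (sub_pos.2 (G_strictMono hy))]
    exact HasDerivAt.congr_of_eventuallyEq ((G_hasDerivAt x).sub_const (Gfun a)) hev

lemma visc_of_props (w : ℝ → ℝ)
    (hactive : ∀ x : ℝ, ∃ b : ℝ → ℝ, ∃ d : ℝ,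
      HasDerivAt b d x ∧ |d| = LagL x ∧ b x = w x ∧ ∀ y, w y ≤ b y)
    (hlipG : ∀ x y : ℝ, |w y - w x| ≤ |Gfun y - Gfun x|) :
    IsViscositySol1 (fun x p => |p| - LagL x) ({0}ᶜ) w := by
  have hopen : IsOpen ({0}ᶜ : Set ℝ) := isOpen_compl_singleton
  constructor
  · intro γ hγ x₀ hx₀ hmin
    have hγ' : HasDerivAt γ (deriv γ x₀) x₀ :=
      (((hγ.contDiffAt (hopen.mem_nhds hx₀)).differentiableAt one_ne_zero)).hasDerivAt
    have hmin' : IsLocalMin (fun x => w x - γ x) x₀ := by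
      have := hmin
      rwa [IsLocalMinOn, nhdsWithin_eq_nhds.2 (hopen.mem_nhds hx₀)] at this
    obtain ⟨b, d, hb, hbd, hbx, hble⟩ := hactive x₀
    have hminb : IsLocalMin (fun x => b x - γ x) x₀ := by
      filter_upwards [hmin'] with y hy
      have h1 : w x₀ - γ x₀ ≤ w y - γ y := hy
      show b x₀ - γ x₀ ≤ b y - γ y
      linarith [hble y, hbx.le, hbx.ge]
    have hder : d - deriv γ x₀ = 0 :=
      hminb.hasDerivAt_eq_zero (hb.sub hγ')
    show 0 ≤ |deriv γ x₀| - LagL x₀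
    rw [show deriv γ x₀ = d by linarith, hbd, sub_self]
  · intro γ hγ x₀ hx₀ hmax
    have hγ' : HasDerivAt γ (deriv γ x₀) x₀ :=
      (((hγ.contDiffAt (hopen.mem_nhds hx₀)).differentiableAt one_ne_zero)).hasDerivAt
    have hmax' : IsLocalMax (fun x => w x - γ x) x₀ := by
      have := hmax
      rwa [IsLocalMaxOn, nhdsWithin_eq_nhds.2 (hopen.mem_nhds hx₀)] at this
    -- right side: (γ + G)' ≥ 0
    have hright : 0 ≤ deriv γ x₀ + LagL x₀ := by
      have hf : HasDerivAt (fun y => γ y + Gfun y) (deriv γ x₀ + LagL x₀) x₀ :=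
        hγ'.add (G_hasDerivAt x₀)
      rw [hasDerivAt_iff_tendsto_slope] at hf
      have hf' : Tendsto (slope (fun y => γ y + Gfun y) x₀) (𝓝[>] x₀)
          (𝓝 (deriv γ x₀ + LagL x₀)) :=
        hf.mono_left (nhdsWithin_mono x₀ fun y hy => ne_of_gt hy)
      refine ge_of_tendsto hf' ?_
      have hmem : Ioi x₀ ∈ 𝓝[>] x₀ := self_mem_nhdsWithin
      filter_upwards [hmem,
        (eventually_nhdsWithin_of_eventually_nhds (s := Ioi x₀) hmax')] with y hy hwy
      rw [slope_def_field]
      apply div_nonneg _ (by linarith [mem_Ioi.1 hy] : 0 ≤ y - x₀)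
      have hwy' : w y - γ y ≤ w x₀ - γ x₀ := hwy
      have h1 : w y - w x₀ ≥ -(Gfun y - Gfun x₀) := by
        have := hlipG x₀ y
        have h2 : Gfun x₀ ≤ Gfun y := G_mono (le_of_lt (mem_Ioi.1 hy))
        rw [abs_of_nonneg (by linarith : 0 ≤ Gfun y - Gfun x₀)] at this
        have := neg_abs_le (w y - w x₀)
        linarith [abs_le.1 (hlipG x₀ y)]
      linarith
    -- left side: (γ - G)' ≤ 0
    have hleft : deriv γ x₀ - LagL x₀ ≤ 0 := by
      have hf : HasDerivAt (fun y => γ y - Gfun y) (deriv γ x₀ - LagL x₀) x₀ :=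
        hγ'.sub (G_hasDerivAt x₀)
      rw [hasDerivAt_iff_tendsto_slope] at hf
      have hf' : Tendsto (slope (fun y => γ y - Gfun y) x₀) (𝓝[<] x₀)
          (𝓝 (deriv γ x₀ - LagL x₀)) :=
        hf.mono_left (nhdsWithin_mono x₀ fun y hy => ne_of_lt hy)
      refine le_of_tendsto hf' ?_
      have hmem : Iio x₀ ∈ 𝓝[<] x₀ := self_mem_nhdsWithin
      filter_upwards [hmem,
        (eventually_nhdsWithin_of_eventually_nhds (s := Iio x₀) hmax')] with y hy hwy
      rw [slope_def_field]
      apply div_nonpos_of_nonneg_of_nonpos _ (by linarith [mem_Iio.1 hy] : y - x₀ ≤ 0)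
      have hwy' : w y - γ y ≤ w x₀ - γ x₀ := hwy
      have h2 : Gfun y ≤ Gfun x₀ := G_mono (le_of_lt (mem_Iio.1 hy))
      have h3 : |Gfun y - Gfun x₀| = Gfun x₀ - Gfun y := by
        rw [abs_of_nonpos (by linarith : Gfun y - Gfun x₀ ≤ 0)]; ring
      have h4 := abs_le.1 (hlipG x₀ y)
      rw [h3] at h4
      linarith [h4.1]
    show |deriv γ x₀| - LagL x₀ ≤ 0
    rw [sub_nonpos, abs_le]
    constructor <;> linarith
/-- the nonuniqueness example.  The value functions `v₁` (target `{0}`)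
and `v₂` (target `{0,2,−2}`) for the data `ẋ = u ∈ [−1,1]`, `ℓ = LagL`, are finite,
continuous, nonnegative, vanish at `0`, are both viscosity solutions of
`|w'(x)| = L(x)` on `ℝ ∖ {0}`, and differ (`v₂(2) = 0 < v₁(2)`): so the HJBE with
target `{0}` has more than one bounded-from-below continuous viscosity solution
vanishing on the target. -/
theorem two_solutions_example :
    ∃ v₁ v₂ : ℝ → ℝ,
      (∀ x, (v₁ x : EReal) = fullerVal {0} x) ∧
      (∀ x, (v₂ x : EReal) = fullerVal {0, 2, -2} x) ∧
      Continuous v₁ ∧ Continuous v₂ ∧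
      (∀ x, 0 ≤ v₁ x) ∧ (∀ x, 0 ≤ v₂ x) ∧
      v₁ 0 = 0 ∧ v₂ 0 = 0 ∧
      IsViscositySol1 (fun x p => |p| - LagL x) ({0}ᶜ) v₁ ∧
      IsViscositySol1 (fun x p => |p| - LagL x) ({0}ᶜ) v₂ ∧
      v₂ 2 = 0 ∧ 0 < v₁ 2 := by

  classical
  set v₁ : ℝ → ℝ := fun x => |Gfun x - Gfun 0| with hv₁def
  set v₂ : ℝ → ℝ := fun x =>
    min (|Gfun x - Gfun 0|) (min (|Gfun x - Gfun 2|) (|Gfun x - Gfun (-2)|)) with hv₂def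
  have hv₁nonneg : ∀ x, 0 ≤ v₁ x := fun x => abs_nonneg _
  have hv₂nonneg : ∀ x, 0 ≤ v₂ x := fun x =>
    le_min (abs_nonneg _) (le_min (abs_nonneg _) (abs_nonneg _))
  have branch_lip : ∀ a x y : ℝ, |(|Gfun y - Gfun a| - |Gfun x - Gfun a|)| ≤ |Gfun y - Gfun x| := by
    intro a x y
    calc |(|Gfun y - Gfun a| - |Gfun x - Gfun a|)| ≤ |(Gfun y - Gfun a) - (Gfun x - Gfun a)| :=
          abs_abs_sub_abs_le_abs_sub _ _
      _ = |Gfun y - Gfun x| := by ring_nf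
  refine ⟨v₁, v₂, ?_, ?_, ?_, ?_, hv₁nonneg, hv₂nonneg, ?_, ?_, ?_, ?_, ?_, ?_⟩
  · -- v₁ = value function for {0}
    intro x
    refine (fullerVal_eq {0} isClosed_singleton x (v₁ x) (hv₁nonneg x) ?_ ?_).symm
    · intro a ha
      rw [Set.mem_singleton_iff] at ha
      subst ha; exact le_rfl
    · exact ⟨0, rfl, rfl⟩
  · -- v₂ = value function for {0,2,-2}
    intro x
    refine (fullerVal_eq {0, 2, -2} (Set.Finite.isClosed (Set.toFinite _)) x (v₂ x)
      (hv₂nonneg x) ?_ ?_).symm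
    · intro a ha
      simp only [Set.mem_insert_iff, Set.mem_singleton_iff] at ha
      rcases ha with h | h | h
      · subst h; exact min_le_left _ _
      · subst h; exact le_trans (min_le_right _ _) (min_le_left _ _)
      · subst h; exact le_trans (min_le_right _ _) (min_le_right _ _)
    · rcases le_total (|Gfun x - Gfun 0|)
        (min (|Gfun x - Gfun 2|) (|Gfun x - Gfun (-2)|)) with h | h
      · exact ⟨0, by left; rfl, (min_eq_left h).symm⟩
      · rcases le_total (|Gfun x - Gfun 2|) (|Gfun x - Gfun (-2)|) with h2 | h2
        · exact ⟨2, by right; left; rfl,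
            ((min_eq_right h).trans (min_eq_left h2)).symm⟩
        · exact ⟨-2, by right; right; rfl,
            ((min_eq_right h).trans (min_eq_right h2)).symm⟩
  · exact (G_cont.sub continuous_const).abs
  · exact ((G_cont.sub continuous_const).abs).min
      (((G_cont.sub continuous_const).abs).min ((G_cont.sub continuous_const).abs))
  · simp [hv₁def]
  · apply le_antisymm _ (hv₂nonneg 0)
    calc v₂ 0 ≤ |Gfun 0 - Gfun 0| := min_le_left _ _
      _ = 0 := by simp
  · -- v₁ viscosity solution
    apply visc_of_props
    · intro x
      obtain ⟨d, hd, hda⟩ := branch_hasDerivAt 0 lagL_zero x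
      exact ⟨fun y => |Gfun y - Gfun 0|, d, hd, hda, rfl, fun y => le_rfl⟩
    · intro x y
      exact branch_lip 0 x y
  · -- v₂ viscosity solution
    apply visc_of_props
    · intro x
      rcases le_total (|Gfun x - Gfun 0|)
        (min (|Gfun x - Gfun 2|) (|Gfun x - Gfun (-2)|)) with h | h
      · obtain ⟨d, hd, hda⟩ := branch_hasDerivAt 0 lagL_zero x
        exact ⟨fun y => |Gfun y - Gfun 0|, d, hd, hda, (min_eq_left h).symm,
          fun y => min_le_left _ _⟩
      · rcases le_total (|Gfun x - Gfun 2|) (|Gfun x - Gfun (-2)|) with h2 | h2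
        · obtain ⟨d, hd, hda⟩ := branch_hasDerivAt 2 lagL_two x
          exact ⟨fun y => |Gfun y - Gfun 2|, d, hd, hda,
            ((min_eq_right h).trans (min_eq_left h2)).symm,
            fun y => le_trans (min_le_right _ _) (min_le_left _ _)⟩
        · obtain ⟨d, hd, hda⟩ := branch_hasDerivAt (-2) lagL_negtwo x
          exact ⟨fun y => |Gfun y - Gfun (-2)|, d, hd, hda,
            ((min_eq_right h).trans (min_eq_right h2)).symm,
            fun y => le_trans (min_le_right _ _) (min_le_right _ _)⟩
    · intro x y
      calc |v₂ y - v₂ x| ≤ max |(|Gfun y - Gfun 0| - |Gfun x - Gfun 0|)|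
            (max |(|Gfun y - Gfun 2| - |Gfun x - Gfun 2|)|
              |(|Gfun y - Gfun (-2)| - |Gfun x - Gfun (-2)|)|) := by
            refine le_trans (abs_min_sub_min_le_max _ _ _ _) ?_
            exact max_le_max le_rfl (abs_min_sub_min_le_max _ _ _ _)
        _ ≤ |Gfun y - Gfun x| := by
            apply max_le (branch_lip 0 x y)
            exact max_le (branch_lip 2 x y) (branch_lip (-2) x y)
  · apply le_antisymm _ (hv₂nonneg 2)
    calc v₂ 2 ≤ min (|Gfun 2 - Gfun 2|) (|Gfun 2 - Gfun (-2)|) := min_le_right _ _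
      _ ≤ |Gfun 2 - Gfun 2| := min_le_left _ _
      _ = 0 := by simp
  · have h02 : Gfun 0 < Gfun 2 := G_strictMono (by norm_num : (0:ℝ) < 2)
    have : Gfun 2 - Gfun 0 ≠ 0 := by linarith
    exact abs_pos.2 this
end
end

section
/- Assume the relaxed-control exit-time setup (A nonempty compact metric space; T ⊆ ℝ^N closed nonempty; f continuous and uniformly Lipschitz in x; ℓ : ℝ^N × A → [0,∞) continuous). Write points of ℝ^N as x = (x₁, x₂, …, x_N) and let f₁ denote the first component of f. Suppose: (i) there are constants K > 0 and C > 0 such that ℓ(x,a) ≥ K|x₁|^C for all a ∈ A and x ∈ ℝ^N; and (ii) for every y ∈ ℝ^{N−1} with (0,y) ∉ T, 0 ∉ { f₁^r((0,y), m) : m ∈ A^r }. Then hypothesis (H5) holds: for every t ∈ (0,∞), every β ∈ 𝒜, and every x ∈ ℝ^N ∖ T, ∫₀^t ℓ^r(y_x(s,β),β(s)) ds > 0. -/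
open MeasureTheory Set Filter Topology Metric
open scoped RealInnerProductSpace ENNReal

noncomputable section

/-- The set of relaxed controls: measurable families `t ↦ β t` of Radon probability
measures on the control space `A` (measurability in the weak-* sense). -/
def IsRelaxedControl {A : Type*} [MetricSpace A] [MeasurableSpace A]
    (β : ℝ → Measure A) : Prop :=
  (∀ t, IsProbabilityMeasure (β t)) ∧
    ∀ g : C(A, ℝ), Measurable fun t => ∫ a, g a ∂(β t)

/-- `y` is the trajectory of `ẏ = f^r(y, β)` with `y 0 = x` (integral form). -/
def IsTrajectory {N : ℕ} {A : Type*} [MeasurableSpace A]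
    (f : EuclideanSpace ℝ (Fin N) → A → EuclideanSpace ℝ (Fin N))
    (β : ℝ → Measure A) (x : EuclideanSpace ℝ (Fin N))
    (y : ℝ → EuclideanSpace ℝ (Fin N)) : Prop :=
  y 0 = x ∧ Continuous y ∧
    ∀ t, 0 ≤ t → y t = x + ∫ s in (0:ℝ)..t, ∫ a, f (y s) a ∂(β s)

/-- The set of times `t ≥ 0` at which the trajectory `y` lies in the target `T`;
its infimum is the exit time `t_x(β)`, and `t_x(β) < ∞` iff this set is nonempty. -/
def exitTimes {N : ℕ} (T : Set (EuclideanSpace ℝ (Fin N)))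
    (y : ℝ → EuclideanSpace ℝ (Fin N)) : Set ℝ :=
  {t : ℝ | 0 ≤ t ∧ y t ∈ T}

/-- The running cost `∫₀^t ℓ^r(y(s), β(s)) ds`, as an extended nonnegative real. -/
def runCost {N : ℕ} {A : Type*} [MeasurableSpace A]
    (ℓ : EuclideanSpace ℝ (Fin N) → A → ℝ) (β : ℝ → Measure A)
    (y : ℝ → EuclideanSpace ℝ (Fin N)) (t : ℝ) : ℝ≥0∞ :=
  ∫⁻ s in Ioc (0:ℝ) t, ENNReal.ofReal (∫ a, ℓ (y s) a ∂(β s))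

/-- The value function `v(x)` of the exit time problem, as an extended real
(`+∞` when no relaxed control brings `x` to the target in finite time). -/
def valueFn {N : ℕ} {A : Type*} [MetricSpace A] [MeasurableSpace A]
    (T : Set (EuclideanSpace ℝ (Fin N))) (ℓ : EuclideanSpace ℝ (Fin N) → A → ℝ)
    (Y : EuclideanSpace ℝ (Fin N) → (ℝ → Measure A) → ℝ → EuclideanSpace ℝ (Fin N))
    (x : EuclideanSpace ℝ (Fin N)) : EReal :=
  sInf { c : EReal | ∃ β : ℝ → Measure A, IsRelaxedControl β ∧
      (exitTimes T (Y x β)).Nonempty ∧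
      c = ((runCost ℓ β (Y x β) (sInf (exitTimes T (Y x β)))) : EReal) }

/-- Viscosity solution of `F(x, Dw(x)) = 0` on the open set `G`, via `C¹` test functions. -/
def IsViscositySol {N : ℕ}
    (F : EuclideanSpace ℝ (Fin N) → EuclideanSpace ℝ (Fin N) → ℝ)
    (G : Set (EuclideanSpace ℝ (Fin N))) (w : EuclideanSpace ℝ (Fin N) → ℝ) : Prop :=
  (∀ γ : EuclideanSpace ℝ (Fin N) → ℝ, ContDiffOn ℝ 1 γ G → ∀ x₀ ∈ G,
      IsLocalMinOn (fun x => w x - γ x) G x₀ → 0 ≤ F x₀ (gradient γ x₀)) ∧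
  (∀ γ : EuclideanSpace ℝ (Fin N) → ℝ, ContDiffOn ℝ 1 γ G → ∀ x₁ ∈ G,
      IsLocalMaxOn (fun x => w x - γ x) G x₁ → F x₁ (gradient γ x₁) ≤ 0)

/-- The Hamiltonian `sup_{m ∈ A^r} { −f^r(x,m)·p − ℓ^r(x,m) }` of the HJBE. -/
def HJB {N : ℕ} {A : Type*} [MetricSpace A] [MeasurableSpace A]
    (f : EuclideanSpace ℝ (Fin N) → A → EuclideanSpace ℝ (Fin N))
    (ℓ : EuclideanSpace ℝ (Fin N) → A → ℝ)
    (x p : EuclideanSpace ℝ (Fin N)) : ℝ :=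
  ⨆ m : ProbabilityMeasure A,
    (-(inner (𝕜 := ℝ) (∫ a, f x a ∂(m : Measure A)) p : ℝ) - ∫ a, ℓ x a ∂(m : Measure A))


section Helpers

lemma cont_integrable' {A : Type*} [MetricSpace A] [CompactSpace A]
    [MeasurableSpace A] [OpensMeasurableSpace A]
    {E : Type*} [NormedAddCommGroup E]
    (m : Measure A) [IsFiniteMeasure m] {g : A → E} (hg : Continuous g) :
    Integrable g m := by
  rcases isEmpty_or_nonempty A with h | h
  · exact ⟨hg.aestronglyMeasurable, by simp [HasFiniteIntegral,
      (by exact Subsingleton.elim _ _ : m = 0)]⟩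
  · obtain ⟨M, hM⟩ := isCompact_univ.exists_bound_of_continuousOn hg.continuousOn
    exact ⟨hg.aestronglyMeasurable, HasFiniteIntegral.of_bounded
      (C := M) (ae_of_all _ fun a => hM a (mem_univ a))⟩

lemma abs_coord_le_norm {N : ℕ} (v : EuclideanSpace ℝ (Fin N)) (i : Fin N) :
    |v i| ≤ ‖v‖ := by
  have h := EuclideanSpace.norm_eq v
  simp only [Real.norm_eq_abs] at h
  have h1 : (v i)^2 ≤ ∑ j, |v j|^2 := by
    have := Finset.single_le_sum (f := fun j => |v j|^2) (fun j _ => sq_nonneg _)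
      (Finset.mem_univ i)
    simpa [sq_abs] using this
  have h2 : (0:ℝ) ≤ ∑ j, |v j|^2 := Finset.sum_nonneg fun j _ => sq_nonneg _
  rw [h]
  nlinarith [Real.sq_sqrt h2, Real.sqrt_nonneg (∑ j, |v j|^2), abs_nonneg (v i), sq_abs (v i)]

lemma meas_comp_traj {A : Type*} [MetricSpace A] [CompactSpace A]
    [MeasurableSpace A] [BorelSpace A] {β : ℝ → Measure A} (hβ : IsRelaxedControl β)
    {E : Type*} [NormedAddCommGroup E] [TopologicalSpace.SeparableSpace E]
    {y : ℝ → E} (hy : Continuous y)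
    {g : E → A → ℝ} (hg : ∀ z, Continuous (g z))
    {L : ℝ} (hLip : ∀ z z' a, |g z a - g z' a| ≤ L * ‖z - z'‖) :
    Measurable fun s => ∫ a, g (y s) a ∂(β s) := by
  haveI := hβ.1
  set φ : E → ℝ → ℝ := fun z s => ∫ a, g z a ∂(β s) with hφ
  have hφm : ∀ z, Measurable (φ z) := fun z => hβ.2 ⟨g z, hg z⟩
  have hint : ∀ z s, Integrable (g z) (β s) := fun z s => cont_integrable' _ (hg z)
  have hφLip : ∀ z z' s, |φ z s - φ z' s| ≤ L * ‖z - z'‖ := by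
    intro z z' s
    rw [hφ]
    simp only
    rw [← integral_sub (hint z s) (hint z' s)]
    calc |∫ a, (g z a - g z' a) ∂β s| ≤ ∫ a, |g z a - g z' a| ∂β s := by
          simpa [Real.norm_eq_abs] using
            norm_integral_le_integral_norm (fun a => g z a - g z' a) (μ := β s)
      _ ≤ ∫ _a, L * ‖z - z'‖ ∂β s := integral_mono
          (((hint z s).sub (hint z' s)).abs) (integrable_const _)
          (fun a => hLip z z' a)
      _ = L * ‖z - z'‖ := by simp
  have hsm : StronglyMeasurable y := hy.stronglyMeasurable
  classical
  apply measurable_of_tendsto_metrizable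
    (f := fun n s => φ (hsm.approx n s) s)
  · intro n
    have heq : (fun s => φ (hsm.approx n s) s)
        = fun s => ∑ z ∈ (hsm.approx n).range, if hsm.approx n s = z then φ z s else 0 := by
      funext s
      rw [Finset.sum_ite_eq ((hsm.approx n).range) (hsm.approx n s) (fun z => φ z s)]
      simp [SimpleFunc.mem_range_self]
    rw [heq]
    apply Finset.measurable_sum
    intro z _
    exact Measurable.ite ((hsm.approx n).measurableSet_fiber z) (hφm z) measurable_const
  · rw [tendsto_pi_nhds]
    intro s
    rw [tendsto_iff_dist_tendsto_zero]
    apply squeeze_zero (fun n => dist_nonneg)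
      (g := fun n => L * dist (hsm.approx n s) (y s))
    · intro n
      rw [Real.dist_eq]
      calc |φ (hsm.approx n s) s - φ (y s) s| ≤ L * ‖hsm.approx n s - y s‖ := hφLip _ _ s
        _ = L * dist (hsm.approx n s) (y s) := by rw [dist_eq_norm]
    · have : Tendsto (fun n => dist (hsm.approx n s) (y s)) atTop (𝓝 0) := by
        simpa using (hsm.tendsto_approx s).dist (tendsto_const_nhds (x := y s) (f := atTop))
      simpa using tendsto_const_nhds.mul this

lemma uniform_sign {A : Type*} [MetricSpace A] [CompactSpace A] [Nonempty A]
    [MeasurableSpace A] [BorelSpace A]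
    {g : A → ℝ} (hg : Continuous g)
    (hne : ∀ m : Measure A, IsProbabilityMeasure m → (∫ a, g a ∂m) ≠ 0) :
    ∃ σ : ℝ, (σ = 1 ∨ σ = -1) ∧ ∃ c > 0, ∀ a, c ≤ σ * g a := by
  have hgval : ∀ a, g a ≠ 0 := by
    intro a ha
    exact hne (Measure.dirac a) inferInstance (by rwa [integral_dirac])
  obtain ⟨a₁, -, hmin⟩ := isCompact_univ.exists_isMinOn univ_nonempty hg.continuousOn
  obtain ⟨a₂, -, hmax⟩ := isCompact_univ.exists_isMaxOn univ_nonempty hg.continuousOn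
  rcases lt_or_gt_of_ne (hgval a₁) with h1 | h1
  · rcases lt_or_gt_of_ne (hgval a₂) with h2 | h2
    · exact ⟨-1, Or.inr rfl, -g a₂, by linarith, fun a => by
        have := hmax (mem_univ a); simp only [IsMaxOn, IsMinOn] at this
        have h := this; simp at h ⊢; nlinarith [h]⟩
    · exfalso
      set p : ℝ := g a₂ / (g a₂ - g a₁) with hp
      have hd : 0 < g a₂ - g a₁ := by linarith
      have hp0 : 0 < p := div_pos h2 hd
      have hp1 : p < 1 := by rw [div_lt_one hd]; linarith
      set m : Measure A := p.toNNReal • Measure.dirac a₁ + (1-p).toNNReal • Measure.dirac a₂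
        with hm
      haveI : IsProbabilityMeasure m := by
        constructor
        rw [hm]
        simp only [Measure.add_apply, Measure.smul_apply, measure_univ, ENNReal.smul_def, smul_eq_mul, mul_one]
        rw [← ENNReal.coe_add, ← Real.toNNReal_add hp0.le (by linarith)]
        norm_num
      have hint : ∫ a, g a ∂m = p * g a₁ + (1-p) * g a₂ := by
        rw [hm, integral_add_measure (cont_integrable' _ hg) (cont_integrable' _ hg),
          integral_smul_nnreal_measure, integral_smul_nnreal_measure, integral_dirac,
          integral_dirac]
        simp [NNReal.smul_def, Real.coe_toNNReal _ hp0.le,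
          Real.coe_toNNReal _ (by linarith : (0:ℝ) ≤ 1 - p)]
      have hzero : p * g a₁ + (1-p) * g a₂ = 0 := by
        rw [hp]
        field_simp
        ring
      exact hne m inferInstance (by rw [hint, hzero])
  · exact ⟨1, Or.inl rfl, g a₁, h1, fun a => by
      have := hmin (mem_univ a); simp only [IsMinOn] at this
      have h := this; simp at h ⊢; linarith [h]⟩

end Helpers

/-- checkable sufficient conditions for `(H₅)`.  If (i) `ℓ(x,a) ≥ K|x₁|^C`
and (ii) the first relaxed dynamic `f₁^r` never vanishes on the hyperplane `{x₁ = 0}`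
off the target, then the positivity hypothesis `(H₅)` holds. -/
theorem H5_from_data {N : ℕ} (hN : 0 < N) {A : Type*} [MetricSpace A] [CompactSpace A]
    [Nonempty A] [MeasurableSpace A] [BorelSpace A]
    (T : Set (EuclideanSpace ℝ (Fin N))) (hTcl : IsClosed T) (hTne : T.Nonempty)
    (f : EuclideanSpace ℝ (Fin N) → A → EuclideanSpace ℝ (Fin N))
    (hf : Continuous fun q : EuclideanSpace ℝ (Fin N) × A => f q.1 q.2)
    (L : ℝ) (hL : 0 < L)
    (hfLip : ∀ x y a, ‖f x a - f y a‖ ≤ L * ‖x - y‖)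
    (ℓ : EuclideanSpace ℝ (Fin N) → A → ℝ)
    (hℓ : Continuous fun q : EuclideanSpace ℝ (Fin N) × A => ℓ q.1 q.2)
    (hℓnn : ∀ x a, 0 ≤ ℓ x a)
    (Y : EuclideanSpace ℝ (Fin N) → (ℝ → Measure A) → ℝ → EuclideanSpace ℝ (Fin N))
    (hY : ∀ x β, IsRelaxedControl β → IsTrajectory f β x (Y x β))
    -- (i): `ℓ(x,a) ≥ K |x₁|^C`
    (K : ℝ) (hK : 0 < K) (C : ℝ) (hC : 0 < C)
    (hi : ∀ x a, K * |x ⟨0, hN⟩| ^ C ≤ ℓ x a)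
    -- (ii): `0 ∉ {f₁^r((0,y), m) : m ∈ A^r}` whenever `(0,y) ∉ T`
    (hii : ∀ x : EuclideanSpace ℝ (Fin N), x ⟨0, hN⟩ = 0 → x ∉ T →
      ∀ m : Measure A, IsProbabilityMeasure m → (∫ a, (f x a) ⟨0, hN⟩ ∂m) ≠ 0) :
    -- (H₅): positive running cost outside the target
    ∀ t > (0:ℝ), ∀ β, IsRelaxedControl β → ∀ x ∉ T, 0 < runCost ℓ β (Y x β) t := by
  intro t ht β hβ x hxT
  haveI := hβ.1
  set e : Fin N := ⟨0, hN⟩ with he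
  obtain ⟨hy0, hyc, hyint⟩ := hY x β hβ
  set y : ℝ → EuclideanSpace ℝ (Fin N) := Y x β with hy
  -- lower bound of the relaxed running cost via hypothesis (i)
  have hℓlow : ∀ z : EuclideanSpace ℝ (Fin N), ∀ s : ℝ,
      K * |z e| ^ C ≤ ∫ a, ℓ z a ∂(β s) := by
    intro z s
    have h1 : Integrable (ℓ z) (β s) := cont_integrable' _ (hℓ.comp (Continuous.prodMk_right z))
    calc K * |z e| ^ C = ∫ _a, K * |z e| ^ C ∂(β s) := by simp
      _ ≤ ∫ a, ℓ z a ∂(β s) := integral_mono (integrable_const _) h1 (fun a => hi z a)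
  -- it suffices to exhibit a subinterval on which the relaxed cost is uniformly positive
  suffices h : ∃ a' b' ε : ℝ, 0 ≤ a' ∧ a' < b' ∧ b' ≤ t ∧ 0 < ε ∧
      ∀ s ∈ Ioc a' b', ε ≤ ∫ a, ℓ (y s) a ∂(β s) by
    obtain ⟨a', b', ε, ha0, hab, hbt, hε, hbd⟩ := h
    have hle : ENNReal.ofReal ε * volume (Ioc a' b') ≤ runCost ℓ β y t := by
      calc ENNReal.ofReal ε * volume (Ioc a' b')
          = ∫⁻ _s in Ioc a' b', ENNReal.ofReal ε := (setLIntegral_const _ _).symm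
        _ ≤ ∫⁻ s in Ioc a' b', ENNReal.ofReal (∫ a, ℓ (y s) a ∂(β s)) :=
            lintegral_mono_ae ((ae_restrict_iff' measurableSet_Ioc).2
              (ae_of_all _ fun s hs => ENNReal.ofReal_le_ofReal (hbd s hs)))
        _ ≤ ∫⁻ s in Ioc 0 t, ENNReal.ofReal (∫ a, ℓ (y s) a ∂(β s)) :=
            lintegral_mono_set (Ioc_subset_Ioc ha0 hbt)
        _ = runCost ℓ β y t := rfl
    refine lt_of_lt_of_le ?_ hle
    rw [Real.volume_Ioc]
    exact ENNReal.mul_pos (ENNReal.ofReal_pos.2 hε).ne'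
      (ENNReal.ofReal_pos.2 (by linarith)).ne'
  rcases eq_or_ne (x e) 0 with hx0 | hx0
  · -- Case `x₁ = 0`: use hypothesis (ii)
    obtain ⟨σ, hσ, c, hc, hσc⟩ := uniform_sign
      (g := fun a => (f x a) e)
      ((EuclideanSpace.proj e).continuous.comp (hf.comp (Continuous.prodMk_right x)))
      (hii x hx0 hxT)
    -- tube lemma: uniform positivity of `σ f₁` near `x`
    have hφc : Continuous fun q : EuclideanSpace ℝ (Fin N) × A => σ * (f q.1 q.2) e :=
      continuous_const.mul ((EuclideanSpace.proj e).continuous.comp hf)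
    obtain ⟨u, v, hu, -, hxu, hvuniv, huv⟩ := generalized_tube_lemma
      (isCompact_singleton : IsCompact ({x} : Set (EuclideanSpace ℝ (Fin N))))
      (isCompact_univ (X := A)) ((isOpen_Ioi (a := c / 2)).preimage hφc)
      (by rintro ⟨z, a⟩ ⟨hz, -⟩
          have hzx : z = x := hz
          subst hzx
          exact mem_preimage.2 (lt_of_lt_of_le (by linarith) (hσc a)))
    have hu' : ∀ z ∈ u, ∀ a, c / 2 < σ * (f z a) e := by
      intro z hz a
      exact huv (Set.mk_mem_prod hz (hvuniv (mem_univ a)))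
    -- a small time interval staying in `u ∩ Tᶜ`
    have hW : IsOpen (u ∩ Tᶜ) := hu.inter hTcl.isOpen_compl
    have hxW : x ∈ u ∩ Tᶜ := ⟨hxu rfl, hxT⟩
    obtain ⟨δ, hδ, hball⟩ := Metric.isOpen_iff.1 (hW.preimage hyc) 0 (by
      rw [mem_preimage, hy0]; exact hxW)
    set b : ℝ := min (δ / 2) t with hb
    have hb0 : 0 < b := lt_min (by linarith) ht
    have hbt : b ≤ t := min_le_right _ _
    have hmem : ∀ s ∈ Icc (0:ℝ) b, y s ∈ u ∩ Tᶜ := by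
      intro s hs
      have : s ∈ ball (0:ℝ) δ := by
        rw [mem_ball, Real.dist_eq, sub_zero, abs_of_nonneg hs.1]
        exact lt_of_le_of_lt (hs.2.trans (min_le_left _ _)) (by linarith)
      exact hball this
    set G : ℝ → EuclideanSpace ℝ (Fin N) := fun s => ∫ a, f (y s) a ∂(β s) with hG
    have hfzc : ∀ z : EuclideanSpace ℝ (Fin N), Continuous fun a => f z a :=
      fun z => hf.comp (Continuous.prodMk_right z)
    have hGieq : ∀ s (i : Fin N), (G s) i = ∫ a, (f (y s) a) i ∂(β s) := by
      intro s i
      exact ((EuclideanSpace.proj i).integral_comp_comm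
        (cont_integrable' (β s) (hfzc (y s)))).symm
    have hGi : ∀ i : Fin N, Measurable fun s => ∫ a, (f (y s) a) i ∂(β s) := by
      intro i
      refine meas_comp_traj hβ hyc
        (g := fun z a => (f z a) i)
        (fun z => (EuclideanSpace.proj i).continuous.comp (hfzc z)) (L := L) ?_
      intro z z' a
      calc |(f z a) i - (f z' a) i| = |(f z a - f z' a) i| := by simp
        _ ≤ ‖f z a - f z' a‖ := abs_coord_le_norm _ i
        _ ≤ L * ‖z - z'‖ := hfLip z z' a
    have hGmeas : Measurable G := by
      have hGeq : G = fun s => (WithLp.toLp 2 (fun i => ∫ a, (f (y s) a) i ∂(β s)) :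
          EuclideanSpace ℝ (Fin N)) := funext fun s => PiLp.ext fun i => hGieq s i
      rw [hGeq]
      exact (WithLp.measurable_toLp 2 _).comp (measurable_pi_lambda _ hGi)
    -- uniform bound of `G` on `[0, b]`
    obtain ⟨M, hM⟩ := (((isCompact_Icc (a := (0:ℝ)) (b := b)).image hyc).prod
      (isCompact_univ (X := A))).exists_bound_of_continuousOn hf.continuousOn
    have hGb : ∀ s ∈ Icc (0:ℝ) b, ‖G s‖ ≤ M := by
      intro s hs
      calc ‖G s‖ ≤ ∫ a, ‖f (y s) a‖ ∂(β s) := norm_integral_le_integral_norm _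
        _ ≤ ∫ _a, M ∂(β s) := integral_mono (cont_integrable' _ (hfzc (y s)).norm)
            (integrable_const _) (fun a => hM (y s, a) ⟨mem_image_of_mem y hs, mem_univ a⟩)
        _ = M := by simp
    have hGint : ∀ s ∈ Icc (0:ℝ) b, IntervalIntegrable G volume 0 s := by
      intro s hs
      rw [intervalIntegrable_iff]
      have hsub : Set.uIoc (0:ℝ) s ⊆ Icc 0 b := by
        rw [uIoc_of_le hs.1]
        exact fun w hw => ⟨hw.1.le, hw.2.trans hs.2⟩
      haveI : IsFiniteMeasure (volume.restrict (Set.uIoc (0:ℝ) s)) := by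
        constructor
        rw [Measure.restrict_apply_univ]
        exact lt_of_le_of_lt (measure_mono hsub)
          (by rw [Real.volume_Icc]; exact ENNReal.ofReal_lt_top)
      exact ⟨hGmeas.aestronglyMeasurable.restrict, HasFiniteIntegral.of_bounded (C := M)
        ((ae_restrict_iff' measurableSet_uIoc).2 (ae_of_all _ fun w hw => hGb w (hsub hw)))⟩
    have hGeint : ∀ s ∈ Icc (0:ℝ) b, IntervalIntegrable (fun w => (G w) e) volume 0 s := by
      intro s hs
      rw [intervalIntegrable_iff]
      have hsub : Set.uIoc (0:ℝ) s ⊆ Icc 0 b := by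
        rw [uIoc_of_le hs.1]
        exact fun w hw => ⟨hw.1.le, hw.2.trans hs.2⟩
      haveI : IsFiniteMeasure (volume.restrict (Set.uIoc (0:ℝ) s)) := by
        constructor
        rw [Measure.restrict_apply_univ]
        exact lt_of_le_of_lt (measure_mono hsub)
          (by rw [Real.volume_Icc]; exact ENNReal.ofReal_lt_top)
      refine ⟨(((EuclideanSpace.proj e).continuous.measurable).comp
        hGmeas).aestronglyMeasurable.restrict, HasFiniteIntegral.of_bounded (C := M)
        ((ae_restrict_iff' measurableSet_uIoc).2 (ae_of_all _ fun w hw => ?_))⟩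
      exact le_trans (by simpa [Real.norm_eq_abs] using abs_coord_le_norm (G w) e)
        (hGb w (hsub hw))
    -- pointwise lower bound on `σ G₁`
    have hGlow : ∀ w ∈ Icc (0:ℝ) b, c / 2 ≤ σ * (G w) e := by
      intro w hw
      rw [hGieq w e, ← integral_const_mul]
      calc c / 2 = ∫ _a, c / 2 ∂(β w) := by simp
        _ ≤ ∫ a, σ * (f (y w) a) e ∂(β w) := integral_mono (integrable_const _)
            (cont_integrable' _ (continuous_const.mul
              ((EuclideanSpace.proj e).continuous.comp (hfzc (y w)))))
            (fun a => (hu' (y w) (hmem w hw).1 a).le)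
    -- the first coordinate of `y` drifts linearly away from `0`
    have hkey : ∀ s ∈ Icc (0:ℝ) b, c / 2 * s ≤ σ * (y s) e := by
      intro s hs
      have h1 : y s = x + ∫ w in (0:ℝ)..s, G w := hyint s hs.1
      have hcoord : (y s) e = ∫ w in (0:ℝ)..s, (G w) e := by
        rw [h1]
        have h2 := (EuclideanSpace.proj e).intervalIntegral_comp_comm (hGint s hs)
        simp only [PiLp.add_apply]
        rw [hx0, zero_add]
        exact h2.symm
      rw [hcoord, ← intervalIntegral.integral_const_mul]
      have hmono := intervalIntegral.integral_mono_on (f := fun _ => c / 2)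
        (g := fun w => σ * (G w) e) hs.1 intervalIntegrable_const
        ((hGeint s hs).const_mul σ)
        (fun w hw => hGlow w ⟨hw.1, hw.2.trans hs.2⟩)
      refine le_trans (le_of_eq ?_) hmono
      rw [intervalIntegral.integral_const]
      simp
      ring
    -- conclude with the interval `(b/2, b]`
    refine ⟨b / 2, b, K * (c / 2 * (b / 2)) ^ C, by linarith, by linarith, hbt,
      mul_pos hK (Real.rpow_pos_of_pos (by positivity) C), ?_⟩
    intro s hs
    have hsIcc : s ∈ Icc (0:ℝ) b := ⟨by linarith [hs.1], hs.2⟩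
    have h3 : c / 2 * (b / 2) ≤ σ * (y s) e :=
      le_trans (by nlinarith [hs.1, hc]) (hkey s hsIcc)
    have h4 : c / 2 * (b / 2) ≤ |(y s) e| := by
      refine le_trans h3 ?_
      rcases hσ with rfl | rfl
      · simpa using le_abs_self _
      · simpa using neg_le_abs ((y s) e)
    calc K * (c / 2 * (b / 2)) ^ C ≤ K * |(y s) e| ^ C :=
          mul_le_mul_of_nonneg_left
            (Real.rpow_le_rpow (by positivity) h4 hC.le) hK.le
      _ ≤ ∫ a, ℓ (y s) a ∂(β s) := hℓlow (y s) s
  · -- Case `x₁ ≠ 0`: the cost is positive near `0` by continuity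
    set r : ℝ := |x e| / 2 with hr
    have hr0 : 0 < r := by
      rw [hr]
      have := abs_pos.2 hx0
      linarith
    have hUopen : IsOpen {z : EuclideanSpace ℝ (Fin N) | r < |z e|} :=
      isOpen_Ioi.preimage (continuous_abs.comp (EuclideanSpace.proj e).continuous)
    obtain ⟨δ, hδ, hball⟩ := Metric.isOpen_iff.1 (hUopen.preimage hyc) 0 (by
      rw [mem_preimage, hy0]
      show r < |x e|
      rw [hr]; have := abs_pos.2 hx0; linarith)
    set b : ℝ := min (δ / 2) t with hb
    have hb0 : 0 < b := lt_min (by linarith) ht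
    refine ⟨0, b, K * r ^ C, le_refl 0, hb0, min_le_right _ _,
      mul_pos hK (Real.rpow_pos_of_pos hr0 C), ?_⟩
    intro s hs
    have : s ∈ ball (0:ℝ) δ := by
      rw [mem_ball, Real.dist_eq, sub_zero, abs_of_nonneg hs.1.le]
      exact lt_of_le_of_lt (hs.2.trans (min_le_left _ _)) (by linarith)
    have hy' : r < |(y s) e| := hball this
    calc K * r ^ C ≤ K * |(y s) e| ^ C :=
          mul_le_mul_of_nonneg_left (Real.rpow_le_rpow hr0.le hy'.le hC.le) hK.le
      _ ≤ ∫ a, ℓ (y s) a ∂(β s) := hℓlow (y s) s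
end
end

section
/- Define I : ℝ² → (0,1] by I(x) := (1 + 4‖x‖²)^{−1/2}, and define u : ℝ² → ℝ by u(x) := 1 − ‖x‖² for ‖x‖ ≤ 1 and u(x) := 0 for ‖x‖ > 1. Then both u and −u are viscosity solutions of the shape-from-shading equation I(x)[1 + ‖Du(x)‖²]^{1/2} − 1 = 0 on the open unit ball B₁(0) ⊆ ℝ². In particular, when the light intensity I attains the value 1, the shape-from-shading equation can have more than one viscosity solution with the same boundary data. -/
open Set Filter Topology Metric

noncomputable section

/-- Viscosity solution of `F(x, Dw(x)) = 0` on the open set `G`, via `C¹` test functions. -/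
def IsViscositySol2 (F : EuclideanSpace ℝ (Fin 2) → EuclideanSpace ℝ (Fin 2) → ℝ)
    (G : Set (EuclideanSpace ℝ (Fin 2))) (w : EuclideanSpace ℝ (Fin 2) → ℝ) : Prop :=
  (∀ γ : EuclideanSpace ℝ (Fin 2) → ℝ, ContDiffOn ℝ 1 γ G → ∀ x₀ ∈ G,
      IsLocalMinOn (fun x => w x - γ x) G x₀ → 0 ≤ F x₀ (gradient γ x₀)) ∧
  (∀ γ : EuclideanSpace ℝ (Fin 2) → ℝ, ContDiffOn ℝ 1 γ G → ∀ x₁ ∈ G,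
      IsLocalMaxOn (fun x => w x - γ x) G x₁ → F x₁ (gradient γ x₁) ≤ 0)

/-- The light intensity `I(x) = (1 + 4‖x‖²)^{−1/2}`, which attains the value `1`. -/
def Ione (x : EuclideanSpace ℝ (Fin 2)) : ℝ := (Real.sqrt (1 + 4 * ‖x‖^2))⁻¹

/-- The surface `u(x) = 1 − ‖x‖²` on the closed unit ball and `0` elsewhere. -/
def surf (x : EuclideanSpace ℝ (Fin 2)) : ℝ := if ‖x‖ ≤ 1 then 1 - ‖x‖^2 else 0

abbrev E2 := EuclideanSpace ℝ (Fin 2)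

lemma hasGradientAt_one_sub_normsq (x : E2) :
    HasGradientAt (fun y : E2 => 1 - ‖y‖^2) (-((2:ℝ) • x)) x := by
  have h1 : HasFDerivAt (fun y : E2 => (inner ℝ y y : ℝ))
      ((fderivInnerCLM ℝ (x, x)).comp ((ContinuousLinearMap.id ℝ E2).prod
        (ContinuousLinearMap.id ℝ E2))) x :=
    (hasFDerivAt_id x).inner ℝ (hasFDerivAt_id x)
  have h2 : HasGradientAt (fun y : E2 => (inner ℝ y y : ℝ)) ((2:ℝ) • x) x := by
    rw [hasGradientAt_iff_hasFDerivAt]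
    refine h1.congr_fderiv ?_
    ext y
    simp [fderivInnerCLM, real_inner_smul_left, two_mul, real_inner_comm]
  have hfun : (fun y : E2 => 1 - ‖y‖^2) = (fun y : E2 => 1 - (inner ℝ y y : ℝ)) := by
    funext y; rw [real_inner_self_eq_norm_sq]
  rw [hfun, hasGradientAt_iff_hasFDerivAt]
  have h3 := (hasFDerivAt_const (1:ℝ) x).sub (hasGradientAt_iff_hasFDerivAt.1 h2)
  refine h3.congr_fderiv ?_
  simp

lemma grad_test {G : Set E2} (hG : IsOpen G) {x₀ : E2} (hx : x₀ ∈ G)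
    {w : E2 → ℝ} {gw : E2} (hw : HasGradientAt w gw x₀)
    {γ : E2 → ℝ} (hγ : ContDiffOn ℝ 1 γ G)
    (h : IsLocalMinOn (fun x => w x - γ x) G x₀ ∨ IsLocalMaxOn (fun x => w x - γ x) G x₀) :
    gradient γ x₀ = gw := by
  have hγd : DifferentiableAt ℝ γ x₀ :=
    (hγ.contDiffAt (hG.mem_nhds hx)).differentiableAt one_ne_zero
  have hsub : HasFDerivAt (fun x => w x - γ x)
      (InnerProductSpace.toDual ℝ E2 gw - fderiv ℝ γ x₀) x₀ :=
    (hasGradientAt_iff_hasFDerivAt.1 hw).sub hγd.hasFDerivAt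
  have hz : InnerProductSpace.toDual ℝ E2 gw - fderiv ℝ γ x₀ = 0 := by
    have hn : 𝓝[G] x₀ = 𝓝 x₀ := nhdsWithin_eq_nhds.2 (hG.mem_nhds hx)
    rcases h with h | h
    · have h' : IsLocalMin (fun x => w x - γ x) x₀ := by
        unfold IsLocalMinOn at h; rwa [hn] at h
      exact h'.hasFDerivAt_eq_zero hsub
    · have h' : IsLocalMax (fun x => w x - γ x) x₀ := by
        unfold IsLocalMaxOn at h; rwa [hn] at h
      exact h'.hasFDerivAt_eq_zero hsub
  have : fderiv ℝ γ x₀ = InnerProductSpace.toDual ℝ E2 gw := by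
    have := sub_eq_zero.1 hz; exact this.symm
  rw [gradient, this, LinearIsometryEquiv.symm_apply_apply]

lemma hasGradientAt_surf {x₀ : E2} (hx : x₀ ∈ ball (0:E2) 1) :
    HasGradientAt surf (-((2:ℝ) • x₀)) x₀ := by
  rw [hasGradientAt_iff_hasFDerivAt]
  refine (hasGradientAt_iff_hasFDerivAt.1 (hasGradientAt_one_sub_normsq x₀)).congr_of_eventuallyEq ?_
  filter_upwards [isOpen_ball.mem_nhds hx] with y hy
  rw [mem_ball_zero_iff] at hy
  simp [surf, hy.le]

lemma hasGradientAt_negsurf {x₀ : E2} (hx : x₀ ∈ ball (0:E2) 1) :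
    HasGradientAt (fun x => -(surf x)) ((2:ℝ) • x₀) x₀ := by
  rw [hasGradientAt_iff_hasFDerivAt]
  have := (hasGradientAt_iff_hasFDerivAt.1 (hasGradientAt_surf hx)).neg
  refine this.congr_fderiv ?_
  simp

lemma Fval (x g : E2) (hg : ‖g‖^2 = 4*‖x‖^2) :
    Ione x * Real.sqrt (1 + ‖g‖^2) - 1 = 0 := by
  rw [Ione, hg, inv_mul_cancel₀, sub_self]
  have h1 : (0:ℝ) < 1 + 4*‖x‖^2 := by positivity
  exact (Real.sqrt_pos.2 h1).ne'

lemma normsq_two_smul (x : E2) : ‖(2:ℝ) • x‖^2 = 4*‖x‖^2 := by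
  rw [norm_smul]; norm_num; ring


/-- nonuniqueness for shape-from-shading when `I` attains the value `1`.
Both `u` and `−u` are viscosity solutions of `I(x)[1 + ‖Du‖²]^{1/2} − 1 = 0` on the open
unit ball. -/
theorem shape_from_shading_nonuniqueness :
    IsViscositySol2 (fun x p => Ione x * Real.sqrt (1 + ‖p‖^2) - 1)
      (ball (0 : EuclideanSpace ℝ (Fin 2)) 1) surf ∧
    IsViscositySol2 (fun x p => Ione x * Real.sqrt (1 + ‖p‖^2) - 1)
      (ball (0 : EuclideanSpace ℝ (Fin 2)) 1) (fun x => -(surf x)) := by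
  refine ⟨⟨?_, ?_⟩, ⟨?_, ?_⟩⟩
  · intro γ hγ x₀ hx h
    rw [grad_test isOpen_ball hx (hasGradientAt_surf hx) hγ (Or.inl h)]
    exact le_of_eq (Fval x₀ _ (by rw [norm_neg]; exact normsq_two_smul x₀)).symm
  · intro γ hγ x₁ hx h
    rw [grad_test isOpen_ball hx (hasGradientAt_surf hx) hγ (Or.inr h)]
    exact le_of_eq (Fval x₁ _ (by rw [norm_neg]; exact normsq_two_smul x₁))
  · intro γ hγ x₀ hx h
    rw [grad_test isOpen_ball hx (hasGradientAt_negsurf hx) hγ (Or.inl h)]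
    exact le_of_eq (Fval x₀ _ (normsq_two_smul x₀)).symm
  · intro γ hγ x₁ hx h
    rw [grad_test isOpen_ball hx (hasGradientAt_negsurf hx) hγ (Or.inr h)]
    exact le_of_eq (Fval x₁ _ (normsq_two_smul x₁))
end
end
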